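/- arXiv:2107.03975 — 4 statements merged into one kernel-verified Lean document; each statement's English description precedes it below -/
import Mathlib

section
/- Let p > 0 and let ν be a probability measure on ℝ with 0 < ∫_ℝ |x|^p dν(x) < ∞. Then the approximation error function f_{p,ν} is continuous on (0,1], and it is strictly decreasing on (0, 1 − ν({0})]: for every pair r₁, r₂ with 0 < r₁ < r₂ ≤ 1 − ν({0}), one has f_{p,ν}(r₂) < f_{p,ν}(r₁). -/
open MeasureTheory Filter Set
open scoped ENNReal Topology Classical

noncomputable section

/-- Left shift on real sequences. -/
def shift : (ℕ → ℝ) → (ℕ → ℝ) := fun x n => x (n + 1)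

/-- First `n` coordinates of a sequence. -/
def proj (n : ℕ) (x : ℕ → ℝ) : Fin n → ℝ := fun i => x i

/-- Best `k`-term `ℓp`-approximation error of `x ∈ ℝ^n`. -/
def sigmaP (p : ℝ) (n k : ℕ) (x : Fin n → ℝ) : ℝ :=
  sInf {e : ℝ | ∃ S : Finset (Fin n), S.card = k ∧ e = (∑ i ∈ Sᶜ, |x i| ^ p) ^ (1 / p)}

/-- Relative best `k`-term `ℓp`-approximation error. -/
def sigmaTilde (p : ℝ) (n k : ℕ) (x : Fin n → ℝ) : ℝ :=
  sigmaP p n k x / (∑ i, |x i| ^ p) ^ (1 / p)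

/-- The set `A^{n,k}_d` of vectors with relative approximation error at most `d`. -/
def Ad (p : ℝ) (n k : ℕ) (d : ℝ) : Set (Fin n → ℝ) := {x | sigmaTilde p n k x ≤ d}

/-- `μ_n`: law of the first `n` coordinates. -/
def lawn (μ : Measure (ℕ → ℝ)) (n : ℕ) : Measure (Fin n → ℝ) := μ.map (proj n)

/-- Strong `ℓp`-characterization with constant limiting function `f : (0,1] → [0,1]`. -/
def StrongLpChar (p : ℝ) (μ : Measure (ℕ → ℝ)) (f : ℝ → ℝ) : Prop :=
  (∀ r ∈ Set.Ioc (0:ℝ) 1, f r ∈ Set.Icc (0:ℝ) 1) ∧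
  ∀ r ∈ Set.Ioc (0:ℝ) 1, ∀ k : ℕ → ℕ,
    Tendsto (fun n : ℕ => (k n : ℝ) / n) atTop (𝓝 r) →
    ∀ᵐ x ∂μ, Tendsto (fun n : ℕ => sigmaTilde p n (k n) (proj n x)) atTop (𝓝 (f r))

/-- `κ̃_p(d, ε, μ_n)`. -/
def kappaP (p : ℝ) (μ : Measure (ℕ → ℝ)) (d ε : ℝ) (n : ℕ) : ℕ :=
  sInf {k : ℕ | 1 ≤ k ∧ k ≤ n ∧ 1 - ε ≤ (lawn μ n (Ad p n k d)).toReal}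

/-- `r̃⁺_p(d, ε, μ)`. -/
def rTildePlus (p : ℝ) (μ : Measure (ℕ → ℝ)) (d ε : ℝ) : ℝ :=
  Filter.limsup (fun n : ℕ => (kappaP p μ d ε n : ℝ) / n) atTop

/-- `r̃⁻_p(d, ε, μ)`. -/
def rTildeMinus (p : ℝ) (μ : Measure (ℕ → ℝ)) (d ε : ℝ) : ℝ :=
  Filter.liminf (fun n : ℕ => (kappaP p μ d ε n : ℝ) / n) atTop

/-- `(r, d)` is `ℓp`-achievable with probability `ε`. -/
def Achievable (p : ℝ) (μ : Measure (ℕ → ℝ)) (d ε r : ℝ) : Prop :=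
  ∃ k : ℕ → ℕ, Filter.limsup (fun n : ℕ => (k n : ℝ) / n) atTop ≤ r ∧
    1 - ε ≤ Filter.liminf (fun n : ℕ => (lawn μ n (Ad p n (k n) d)).toReal) atTop

/-- `r_p(d, ε, μ)`: the rate-approximation error function. -/
def rOp (p : ℝ) (μ : Measure (ℕ → ℝ)) (d ε : ℝ) : ℝ :=
  sInf {r : ℝ | r ∈ Set.Icc (0:ℝ) 1 ∧ Achievable p μ d ε r}

/-- `μ` is AMS with stationary mean `ν`. -/
def HasStationaryMean (μ ν : Measure (ℕ → ℝ)) : Prop :=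
  ∀ F : Set (ℕ → ℝ), MeasurableSet F →
    Tendsto (fun n : ℕ => (∑ i ∈ Finset.range n, (μ (shift^[i] ⁻¹' F)).toReal) / n)
      atTop (𝓝 (ν F).toReal)

/-- `μ` is asymptotically mean stationary. -/
def IsAMS (μ : Measure (ℕ → ℝ)) : Prop :=
  ∀ F : Set (ℕ → ℝ), MeasurableSet F →
    ∃ L : ℝ, Tendsto (fun n : ℕ => (∑ i ∈ Finset.range n, (μ (shift^[i] ⁻¹' F)).toReal) / n)
      atTop (𝓝 L)

/-- `ν` is stationary with respect to the shift. -/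
def IsStationaryShift (ν : Measure (ℕ → ℝ)) : Prop :=
  ∀ F : Set (ℕ → ℝ), MeasurableSet F → ν (shift ⁻¹' F) = ν F

/-- `μ` is ergodic with respect to the shift. -/
def IsErgodicShift (μ : Measure (ℕ → ℝ)) : Prop :=
  ∀ F : Set (ℕ → ℝ), MeasurableSet F → shift ⁻¹' F = F → μ F = 0 ∨ μ F = 1

/-- 1D marginal: the law of the first coordinate. -/
def marginal1 (ν : Measure (ℕ → ℝ)) : Measure ℝ := ν.map (fun x => x 0)

/-- The `p`-th absolute moment `∫ |x|^p dν` (as an extended real). -/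
def momentP (p : ℝ) (ν : Measure ℝ) : ℝ≥0∞ := ∫⁻ x, ENNReal.ofReal (|x| ^ p) ∂ν

/-- Tail set `B_τ = (−∞,−τ] ∪ [τ,∞)`. -/
def Btau (τ : ℝ) : Set ℝ := Set.Iic (-τ) ∪ Set.Ici τ

/-- Tail set `C_τ = (−∞,−τ) ∪ (τ,∞)`. -/
def Ctau (τ : ℝ) : Set ℝ := Set.Iio (-τ) ∪ Set.Ioi τ

/-- Tail distribution function `φ_ν(τ) = ν(B_τ)`. -/
def phiTail (ν : Measure ℝ) (τ : ℝ) : ℝ := (ν (Btau τ)).toReal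

/-- `v_p(B) = (∫_B |x|^p dν) / (∫_ℝ |x|^p dν)`. -/
def vP (p : ℝ) (ν : Measure ℝ) (B : Set ℝ) : ℝ :=
  ((∫⁻ x in B, ENNReal.ofReal (|x| ^ p) ∂ν) / momentP p ν).toReal

/-- The rate vs approximation error graph `F_ν`. -/
def Fgraph (p : ℝ) (ν : Measure ℝ) : Set (ℝ × ℝ) :=
  {q | ∃ τ : ℝ, 0 ≤ τ ∧ q = (phiTail ν τ, (1 - vP p ν (Btau τ)) ^ (1 / p))} ∪
  {q | ∃ τ : ℝ, 0 ≤ τ ∧ 0 < (ν ({-τ, τ} : Set ℝ)).toReal ∧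
       ∃ α ∈ Set.Ico (0:ℝ) 1,
         q = ((ν (Ctau τ)).toReal + α * (ν ({-τ, τ} : Set ℝ)).toReal,
              (1 - vP p ν (Ctau τ) - α * vP p ν ({-τ, τ} : Set ℝ)) ^ (1 / p))}

/-- Approximation error function `f_{p,ν} : (0,1] → [0,1)`, defined through its graph `F_ν`,
with the convention `f_{p,ν} ≡ 0` when the `p`-th moment of `ν` is infinite. -/
def fApprox (p : ℝ) (ν : Measure ℝ) (r : ℝ) : ℝ :=
  if momentP p ν = ∞ then 0 else sSup {d : ℝ | (r, d) ∈ Fgraph p ν}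


namespace FA

open Real

variable {p : ℝ} {ν : Measure ℝ}

lemma measB (τ : ℝ) : MeasurableSet (Btau τ) := measurableSet_Iic.union measurableSet_Ici
lemma measC (τ : ℝ) : MeasurableSet (Ctau τ) := measurableSet_Iio.union measurableSet_Ioi
lemma measD (τ : ℝ) : MeasurableSet ({-τ, τ} : Set ℝ) :=
  (measurableSet_singleton τ).insert (-τ)

lemma mem_B {x τ : ℝ} : x ∈ Btau τ ↔ τ ≤ |x| := by
  simp only [Btau, Set.mem_union, Set.mem_Iic, Set.mem_Ici, le_abs, le_neg]
  tauto

lemma mem_C {x τ : ℝ} : x ∈ Ctau τ ↔ τ < |x| := by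
  simp only [Ctau, Set.mem_union, Set.mem_Iio, Set.mem_Ioi, lt_abs, lt_neg]
  tauto

lemma mem_D {x τ : ℝ} (hτ : 0 ≤ τ) : x ∈ ({-τ, τ} : Set ℝ) ↔ |x| = τ := by
  simp only [Set.mem_insert_iff, Set.mem_singleton_iff, abs_eq hτ]
  tauto

lemma B_eq_C_union_D {τ : ℝ} (hτ : 0 ≤ τ) : Btau τ = Ctau τ ∪ ({-τ, τ} : Set ℝ) := by
  ext x
  simp only [Set.mem_union, mem_B, mem_C, mem_D hτ]
  constructor
  · intro h
    rcases lt_or_eq_of_le h with h | h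
    · exact Or.inl h
    · exact Or.inr h.symm
  · rintro (h | h)
    · exact h.le
    · exact h.ge

lemma disjCD {τ : ℝ} (hτ : 0 ≤ τ) : Disjoint (Ctau τ) ({-τ, τ} : Set ℝ) := by
  rw [Set.disjoint_left]
  intro x hx hx'
  rw [mem_C] at hx
  rw [mem_D hτ] at hx'
  exact absurd hx' (ne_of_gt hx)

/-- `∫⁻_B |x|^p dν` as an extended real. -/
def J (p : ℝ) (ν : Measure ℝ) (B : Set ℝ) : ℝ≥0∞ := ∫⁻ x in B, ENNReal.ofReal (|x| ^ p) ∂ν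

/-- `∫_B |x|^p dν` as a real. -/
def I (p : ℝ) (ν : Measure ℝ) (B : Set ℝ) : ℝ := (J p ν B).toReal

def S (ν : Measure ℝ) (r : ℝ) : Set ℝ := {τ : ℝ | 0 ≤ τ ∧ r ≤ phiTail ν τ}

def tauR (ν : Measure ℝ) (r : ℝ) : ℝ := sSup (S ν r)

def G (p : ℝ) (ν : Measure ℝ) (r : ℝ) : ℝ :=
  I p ν (Ctau (tauR ν r)) + (r - (ν (Ctau (tauR ν r))).toReal) * (tauR ν r) ^ p

def gfun (p : ℝ) (ν : Measure ℝ) (r : ℝ) : ℝ :=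
  (1 - G p ν r / (momentP p ν).toReal) ^ (1 / p)

lemma meas_integrand (hp : 0 < p) : Measurable fun x : ℝ => ENNReal.ofReal (|x| ^ p) :=
  ENNReal.measurable_ofReal.comp
    ((continuous_abs.rpow_const fun _ => Or.inr hp.le)).measurable

lemma J_le_moment (B : Set ℝ) : J p ν B ≤ momentP p ν :=
  setLIntegral_le_lintegral _ _

lemma J_ne_top (hmomfin : momentP p ν < ∞) (B : Set ℝ) : J p ν B ≠ ∞ :=
  ((J_le_moment B).trans_lt hmomfin).ne

lemma J_union {A B : Set ℝ} (hB : MeasurableSet B) (hAB : Disjoint A B) :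
    J p ν (A ∪ B) = J p ν A + J p ν B := lintegral_union hB hAB

lemma J_univ : J p ν Set.univ = momentP p ν := by
  rw [J, momentP, Measure.restrict_univ]

lemma J_D {τ : ℝ} (hτ : 0 ≤ τ) :
    J p ν ({-τ, τ} : Set ℝ) = ENNReal.ofReal (τ ^ p) * ν ({-τ, τ} : Set ℝ) := by
  rw [J, setLIntegral_congr_fun (measD τ) ?_, setLIntegral_const]
  intro x hx
  simp only []
  rw [(mem_D hτ).mp hx]

lemma J_mono {A B : Set ℝ} (hAB : A ⊆ B) : J p ν A ≤ J p ν B :=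
  lintegral_mono_set hAB

lemma J_diff_eq_zero {A B : Set ℝ} (hAB : A ⊆ B)
    (h0 : ν (B \ A) = 0) : J p ν B = J p ν A := by
  refine le_antisymm ?_ (J_mono hAB)
  calc J p ν B = J p ν (A ∪ (B \ A)) := by rw [Set.union_diff_cancel hAB]
    _ ≤ J p ν A + J p ν (B \ A) := lintegral_union_le _ _ _
    _ = J p ν A := by
        have h1 : J p ν (B \ A) = 0 := setLIntegral_measure_zero _ _ h0
        rw [h1, add_zero]

lemma J_le_const {s : Set ℝ} {c : ℝ} (hp : 0 < p) (hs : MeasurableSet s) (h : ∀ x ∈ s, |x| ≤ c) :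
    J p ν s ≤ ENNReal.ofReal (c ^ p) * ν s := by
  rw [← setLIntegral_const]
  exact setLIntegral_mono' hs fun x hx =>
    ENNReal.ofReal_le_ofReal (Real.rpow_le_rpow (abs_nonneg x) (h x hx) hp.le)

lemma const_le_J {s : Set ℝ} {c : ℝ} (hp : 0 < p) (hc : 0 ≤ c) (hs : MeasurableSet s)
    (h : ∀ x ∈ s, c ≤ |x|) :
    ENNReal.ofReal (c ^ p) * ν s ≤ J p ν s := by
  rw [← setLIntegral_const]
  exact setLIntegral_mono' hs fun x hx =>
    ENNReal.ofReal_le_ofReal (Real.rpow_le_rpow hc (h x hx) hp.le)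

lemma J_pos (hp : 0 < p) {s : Set ℝ} (hs : MeasurableSet s) (h0 : ∀ x ∈ s, x ≠ 0)
    (hν : ν s ≠ 0) : J p ν s ≠ 0 := by
  intro hJ
  rw [J, lintegral_eq_zero_iff (meas_integrand hp)] at hJ
  rw [EventuallyEq, ae_restrict_iff' hs] at hJ
  apply hν
  rw [measure_eq_zero_iff_ae_notMem]
  filter_upwards [hJ] with x hx hxs
  have h1 : (0:ℝ) < |x| ^ p := Real.rpow_pos_of_pos (abs_pos.mpr (h0 x hxs)) p
  exact absurd (hx hxs) (ne_of_gt (ENNReal.ofReal_pos.mpr h1))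

section Phi
variable [IsProbabilityMeasure ν]

lemma B_anti : Antitone (Btau) := by
  intro a b hab x hx
  rw [mem_B] at hx ⊢
  exact le_trans hab hx

lemma phi_antitone : Antitone (phiTail ν) := fun a b hab =>
  ENNReal.toReal_mono (measure_ne_top ν _) (measure_mono (B_anti hab))

lemma phi_zero : phiTail ν 0 = 1 := by
  have : Btau (0:ℝ) = Set.univ := by
    ext x; simp [mem_B, abs_nonneg]
  rw [phiTail, this, measure_univ, ENNReal.toReal_one]

lemma exists_phi_lt {r : ℝ} (hr : 0 < r) : ∃ T : ℝ, phiTail ν T < r := by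
  have hlim : Tendsto (fun n : ℕ => ν (Btau (n : ℝ))) atTop (𝓝 (ν (⋂ n : ℕ, Btau (n : ℝ)))) :=
    tendsto_measure_iInter_atTop (fun n => (measB _).nullMeasurableSet)
      (fun a b hab => B_anti (by exact_mod_cast hab)) ⟨0, measure_ne_top ν _⟩
  have hempty : (⋂ n : ℕ, Btau ((n : ℕ) : ℝ)) = ∅ := by
    ext x
    simp only [Set.mem_iInter, Set.mem_empty_iff_false, iff_false, not_forall]
    obtain ⟨n, hn⟩ := exists_nat_gt |x|
    exact ⟨n, fun hx => absurd (mem_B.mp hx) (not_le.mpr hn)⟩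
  rw [hempty, measure_empty] at hlim
  have := hlim.eventually_lt_const (ENNReal.ofReal_pos.mpr hr)
  obtain ⟨n, hn⟩ := this.exists
  refine ⟨n, ?_⟩
  rw [phiTail]
  have h2 := (ENNReal.toReal_lt_toReal (measure_ne_top ν _) ENNReal.ofReal_ne_top).mpr hn
  rwa [ENNReal.toReal_ofReal hr.le] at h2

lemma zero_mem_S {r : ℝ} (hr : r ∈ Set.Ioc (0:ℝ) 1) : 0 ∈ S ν r :=
  ⟨le_rfl, by rw [phi_zero]; exact hr.2⟩

lemma S_nonempty {r : ℝ} (hr : r ∈ Set.Ioc (0:ℝ) 1) : (S ν r).Nonempty :=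
  ⟨0, zero_mem_S hr⟩

lemma S_bddAbove {r : ℝ} (hr : 0 < r) : BddAbove (S ν r) := by
  obtain ⟨T, hT⟩ := exists_phi_lt (ν := ν) hr
  refine ⟨T, fun τ hτ => ?_⟩
  by_contra h
  push_neg at h
  exact absurd (hτ.2.trans (phi_antitone h.le)) (not_le.mpr hT)

lemma tau_nonneg {r : ℝ} (hr : r ∈ Set.Ioc (0:ℝ) 1) : 0 ≤ tauR ν r :=
  le_csSup (S_bddAbove hr.1) (zero_mem_S hr)

lemma phi_lt_of_tau_lt {r τ : ℝ} (hr : r ∈ Set.Ioc (0:ℝ) 1) (h : tauR ν r < τ) :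
    phiTail ν τ < r := by
  by_contra hc
  push_neg at hc
  have hτ0 : (0:ℝ) ≤ τ := le_trans (tau_nonneg hr) h.le
  exact absurd (le_csSup (S_bddAbove hr.1) ⟨hτ0, hc⟩) (not_le.mpr h)

lemma r_le_phi_of_lt_tau {r τ : ℝ} (hr : r ∈ Set.Ioc (0:ℝ) 1) (h : τ < tauR ν r) :
    r ≤ phiTail ν τ := by
  obtain ⟨a, haS, hlt⟩ := exists_lt_of_lt_csSup (S_nonempty hr) h
  exact le_trans haS.2 (phi_antitone hlt.le)

lemma r_le_phi_tau {r : ℝ} (hr : r ∈ Set.Ioc (0:ℝ) 1) : r ≤ phiTail ν (tauR ν r) := by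
  set t := tauR ν r with ht
  rcases eq_or_lt_of_le (tau_nonneg (ν := ν) hr) with h0 | h0
  · rw [ht, ← h0, phi_zero]; exact hr.2
  · have hiInter : Btau t = ⋂ n : ℕ, Btau (t - t / (n + 1)) := by
      ext x
      simp only [Set.mem_iInter, mem_B]
      constructor
      · intro hx n
        have : 0 ≤ t / (n + 1) := div_nonneg h0.le (by positivity)
        linarith
      · intro hx
        by_contra hc
        push_neg at hc
        obtain ⟨n, hn⟩ := exists_nat_gt (t / (t - |x|))
        have hpos : 0 < t - |x| := by linarith
        have h1 : t / (t - |x|) < (n:ℝ) + 1 := by linarith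
        have h2 : t / ((n:ℝ) + 1) < t - |x| := by
          rw [div_lt_iff₀ (by positivity)] at h1 ⊢
          nlinarith
        linarith [hx n]
    have hanti : Antitone fun n : ℕ => Btau (t - t / (n + 1)) := by
      intro a b hab
      apply B_anti
      have h1 : ((a:ℝ) + 1) ≤ (b:ℝ) + 1 := by exact_mod_cast Nat.succ_le_succ hab
      have := div_le_div_of_nonneg_left h0.le (by positivity : (0:ℝ) < (a:ℝ)+1) h1
      linarith
    have hmeas := (hanti.measure_iInter (μ := ν)
      (fun n => (measB _).nullMeasurableSet) ⟨0, measure_ne_top ν _⟩)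
    have hlow : ∀ n : ℕ, ENNReal.ofReal r ≤ ν (Btau (t - t / (n + 1))) := by
      intro n
      have hlt : t - t / (n + 1) < t := by
        have : 0 < t / (n + 1) := div_pos h0 (by positivity)
        linarith
      exact ENNReal.ofReal_le_of_le_toReal (r_le_phi_of_lt_tau hr hlt)
    have : ENNReal.ofReal r ≤ ν (Btau t) := by
      rw [hiInter, hmeas]
      exact le_iInf hlow
    rw [phiTail]
    exact (ENNReal.ofReal_le_iff_le_toReal (measure_ne_top ν _)).mp this

lemma nuC_le_r {r : ℝ} (hr : r ∈ Set.Ioc (0:ℝ) 1) :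
    (ν (Ctau (tauR ν r))).toReal ≤ r := by
  set t := tauR ν r with ht
  have hiUnion : Ctau t = ⋃ n : ℕ, Btau (t + 1 / (n + 1)) := by
    ext x
    simp only [Set.mem_iUnion, mem_C, mem_B]
    constructor
    · intro hx
      obtain ⟨n, hn⟩ := exists_nat_gt (1 / (|x| - t))
      have hpos : 0 < |x| - t := by linarith
      have h1 : 1 / (|x| - t) < (n:ℝ) + 1 := by linarith
      have h2 : 1 / ((n:ℝ) + 1) < |x| - t := by
        rw [div_lt_iff₀ (by positivity)] at h1 ⊢
        nlinarith
      exact ⟨n, by linarith⟩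
    · rintro ⟨n, hn⟩
      have : 0 < 1 / ((n:ℝ) + 1) := by positivity
      linarith
  have hmono : Monotone fun n : ℕ => Btau (t + 1 / (n + 1)) := by
    intro a b hab
    apply B_anti
    have h1 : ((a:ℝ) + 1) ≤ (b:ℝ) + 1 := by exact_mod_cast Nat.succ_le_succ hab
    have := one_div_le_one_div_of_le (by positivity : (0:ℝ) < (a:ℝ)+1) h1
    linarith
  have hmeas := hmono.measure_iUnion (μ := ν)
  have hup : ∀ n : ℕ, ν (Btau (t + 1 / (n + 1))) ≤ ENNReal.ofReal r := by
    intro n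
    have hlt : t < t + 1 / (n + 1) := by
      have : 0 < 1 / ((n:ℝ) + 1) := by positivity
      linarith
    exact (ENNReal.le_ofReal_iff_toReal_le (measure_ne_top ν _) hr.1.le).mpr
      (phi_lt_of_tau_lt hr hlt).le
  have : ν (Ctau t) ≤ ENNReal.ofReal r := by
    rw [hiUnion, hmeas]
    exact iSup_le hup
  exact ENNReal.toReal_le_of_le_ofReal hr.1.le this

lemma tau_antitone {r r' : ℝ} (hr : r ∈ Set.Ioc (0:ℝ) 1) (hr' : r' ∈ Set.Ioc (0:ℝ) 1)
    (h : r ≤ r') : tauR ν r' ≤ tauR ν r :=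
  csSup_le_csSup (S_bddAbove hr.1) (S_nonempty hr')
    (fun τ hτ => ⟨hτ.1, le_trans h hτ.2⟩)

end Phi


section Value
variable [IsProbabilityMeasure ν]

lemma I_nonneg (B : Set ℝ) : 0 ≤ I p ν B := ENNReal.toReal_nonneg

lemma nu_B_split {τ : ℝ} (hτ : 0 ≤ τ) :
    (ν (Btau τ)).toReal = (ν (Ctau τ)).toReal + (ν ({-τ, τ} : Set ℝ)).toReal := by
  rw [B_eq_C_union_D hτ, measure_union (disjCD hτ) (measD τ),
    ENNReal.toReal_add (measure_ne_top ν _) (measure_ne_top ν _)]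

lemma I_D {τ : ℝ} (hp : 0 < p) (hmomfin : momentP p ν < ∞) (hτ : 0 ≤ τ) :
    I p ν ({-τ, τ} : Set ℝ) = τ ^ p * (ν ({-τ, τ} : Set ℝ)).toReal := by
  rw [I, J_D hτ, ENNReal.toReal_mul, ENNReal.toReal_ofReal (Real.rpow_nonneg hτ p)]

lemma I_B_split {τ : ℝ} (hp : 0 < p) (hmomfin : momentP p ν < ∞) (hτ : 0 ≤ τ) :
    I p ν (Btau τ) = I p ν (Ctau τ) + τ ^ p * (ν ({-τ, τ} : Set ℝ)).toReal := by
  rw [I, B_eq_C_union_D hτ, J_union (measD τ) (disjCD hτ),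
    ENNReal.toReal_add (J_ne_top hmomfin _) (J_ne_top hmomfin _)]
  rw [← I_D hp hmomfin hτ]
  rfl

lemma vP_eq (B : Set ℝ) : vP p ν B = I p ν B / (momentP p ν).toReal := by
  rw [vP, ENNReal.toReal_div]
  rfl

lemma I_univ : I p ν Set.univ = (momentP p ν).toReal := by rw [I, J_univ]

lemma I_le_M (hmomfin : momentP p ν < ∞) (B : Set ℝ) : I p ν B ≤ (momentP p ν).toReal :=
  ENNReal.toReal_mono hmomfin.ne (J_le_moment B)

/-- Case 1 identity: if `φ(τ) = r` then `∫_{B_τ} = G(r)`. -/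
lemma I_B_eq_G {r τ : ℝ} (hp : 0 < p) (hmomfin : momentP p ν < ∞)
    (hr : r ∈ Set.Ioc (0:ℝ) 1) (hτ : 0 ≤ τ) (hφ : phiTail ν τ = r) :
    I p ν (Btau τ) = G p ν r := by
  set t := tauR ν r with htdef
  have hτt : τ ≤ t := le_csSup (S_bddAbove hr.1) ⟨hτ, hφ.ge⟩
  have ht0 : 0 ≤ t := le_trans hτ hτt
  have hφt : phiTail ν t = r :=
    le_antisymm (hφ ▸ phi_antitone hτt) (r_le_phi_tau hr)
  have hBsub : Btau t ⊆ Btau τ := B_anti hτt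
  have hmeq : ν (Btau τ) = ν (Btau t) :=
    (ENNReal.toReal_eq_toReal_iff' (measure_ne_top ν _) (measure_ne_top ν _)).mp
      (hφ.trans hφt.symm)
  have hnull : ν (Btau τ \ Btau t) = 0 := by
    rw [measure_diff hBsub (measB t).nullMeasurableSet (measure_ne_top ν _), hmeq,
      tsub_self]
  have hJ : J p ν (Btau τ) = J p ν (Btau t) := J_diff_eq_zero hBsub hnull
  have hI : I p ν (Btau τ) = I p ν (Btau t) := by rw [I, I, hJ]
  rw [hI, I_B_split hp hmomfin ht0, G, ← htdef]
  have hsplit := nu_B_split (ν := ν) ht0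
  rw [phiTail] at hφt
  have : r - (ν (Ctau t)).toReal = (ν ({-t, t} : Set ℝ)).toReal := by
    rw [← hφt, hsplit]; ring
  rw [this]; ring

/-- Case 2 identity. -/
lemma case2_eq_G {r τ α : ℝ} (hp : 0 < p) (hmomfin : momentP p ν < ∞)
    (hr : r ∈ Set.Ioc (0:ℝ) 1) (hτ : 0 ≤ τ)
    (hD : 0 < (ν ({-τ, τ} : Set ℝ)).toReal) (hα : α ∈ Set.Ico (0:ℝ) 1)
    (hrr : r = (ν (Ctau τ)).toReal + α * (ν ({-τ, τ} : Set ℝ)).toReal) :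
    I p ν (Ctau τ) + α * I p ν ({-τ, τ} : Set ℝ) = G p ν r := by
  set t := tauR ν r with htdef
  have hsplit := nu_B_split (ν := ν) hτ
  have hrlt : r < phiTail ν τ := by
    rw [phiTail, hsplit, hrr]
    nlinarith [hα.2, hD]
  have hτt : τ ≤ t := le_csSup (S_bddAbove hr.1) ⟨hτ, hrlt.le⟩
  have ht0 : 0 ≤ t := le_trans hτ hτt
  rcases eq_or_lt_of_le hτt with heq | hlt
  · rw [G, ← htdef, ← heq, I_D hp hmomfin hτ]
    have : r - (ν (Ctau τ)).toReal = α * (ν ({-τ, τ} : Set ℝ)).toReal := by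
      rw [hrr]; ring
    rw [this]; ring
  · -- τ < t
    have hBsubC : Btau t ⊆ Ctau τ := by
      intro x hx
      rw [mem_B] at hx
      rw [mem_C]
      linarith
    have h1 : (ν (Btau t)).toReal ≤ (ν (Ctau τ)).toReal :=
      ENNReal.toReal_mono (measure_ne_top ν _) (measure_mono hBsubC)
    have h2 : (ν (Ctau τ)).toReal ≤ r := by
      nlinarith [hα.1, hD.le]
    have h3 : r ≤ (ν (Btau t)).toReal := r_le_phi_tau hr
    have hφt : phiTail ν t = r := le_antisymm (le_trans h1 h2) h3
    have hCr : (ν (Ctau τ)).toReal = r := le_antisymm h2 (le_trans h3 h1)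
    have hα0 : α = 0 := by
      have : α * (ν ({-τ, τ} : Set ℝ)).toReal = 0 := by rw [hrr] at hCr; linarith
      rcases mul_eq_zero.mp this with h | h
      · exact h
      · exact absurd h hD.ne'
    have hmeq : ν (Ctau τ) = ν (Btau t) :=
      (ENNReal.toReal_eq_toReal_iff' (measure_ne_top ν _) (measure_ne_top ν _)).mp
        (by rw [hCr, ← hφt]; rfl)
    have hnull : ν (Ctau τ \ Btau t) = 0 := by
      rw [measure_diff hBsubC (measB t).nullMeasurableSet (measure_ne_top ν _), hmeq,
        tsub_self]
    have hJ : J p ν (Ctau τ) = J p ν (Btau t) := J_diff_eq_zero hBsubC hnull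
    have hI : I p ν (Ctau τ) = I p ν (Btau t) := by rw [I, I, hJ]
    rw [hα0, zero_mul, add_zero, hI]
    exact I_B_eq_G hp hmomfin hr ht0 hφt

lemma graph_val {r : ℝ} (hp : 0 < p) (hmom0 : 0 < momentP p ν)
    (hmomfin : momentP p ν < ∞) (hr : r ∈ Set.Ioc (0:ℝ) 1) :
    {d : ℝ | (r, d) ∈ Fgraph p ν} = {gfun p ν r} := by
  have hM : 0 < (momentP p ν).toReal := ENNReal.toReal_pos hmom0.ne' hmomfin.ne
  set M := (momentP p ν).toReal with hMdef
  ext d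
  simp only [Set.mem_setOf_eq, Set.mem_singleton_iff]
  constructor
  · rintro (⟨τ, hτ, heq⟩ | ⟨τ, hτ, hD, α, hα, heq⟩)
    · simp only [Prod.mk.injEq] at heq
      obtain ⟨h1, h2⟩ := heq
      rw [gfun, h2, vP_eq, ← I_B_eq_G hp hmomfin hr hτ h1.symm]
    · simp only [Prod.mk.injEq] at heq
      obtain ⟨h1, h2⟩ := heq
      rw [gfun, h2, vP_eq, vP_eq, ← case2_eq_G hp hmomfin hr hτ hD hα h1]
      congr 1
      field_simp
      ring
  · intro hd
    subst hd
    set t := tauR ν r with htdef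
    have ht0 : 0 ≤ t := tau_nonneg hr
    rcases eq_or_lt_of_le (r_le_phi_tau (ν := ν) hr) with hφ | hφ
    · left
      refine ⟨t, ht0, ?_⟩
      rw [Prod.mk.injEq]
      refine ⟨hφ, ?_⟩
      rw [gfun, vP_eq, ← I_B_eq_G hp hmomfin hr ht0 hφ.symm]
    · right
      have hsplit := nu_B_split (ν := ν) ht0
      have hCle : (ν (Ctau t)).toReal ≤ r := nuC_le_r hr
      have hDpos : 0 < (ν ({-t, t} : Set ℝ)).toReal := by
        rw [phiTail] at hφ
        nlinarith
      set α := (r - (ν (Ctau t)).toReal) / (ν ({-t, t} : Set ℝ)).toReal with hαdef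
      have hαD : α * (ν ({-t, t} : Set ℝ)).toReal = r - (ν (Ctau t)).toReal := by
        rw [hαdef, div_mul_cancel₀ _ hDpos.ne']
      have hα : α ∈ Set.Ico (0:ℝ) 1 := by
        constructor
        · exact div_nonneg (by linarith) hDpos.le
        · rw [div_lt_one hDpos]
          rw [phiTail] at hφ
          linarith
      have hrr : r = (ν (Ctau t)).toReal + α * (ν ({-t, t} : Set ℝ)).toReal := by
        rw [hαD]; ring
      refine ⟨t, ht0, hDpos, α, hα, ?_⟩
      rw [Prod.mk.injEq]
      refine ⟨hrr, ?_⟩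
      rw [gfun, vP_eq, vP_eq, ← case2_eq_G hp hmomfin hr ht0 hDpos hα hrr]
      congr 1
      field_simp
      ring

lemma fApprox_eq {r : ℝ} (hp : 0 < p) (hmom0 : 0 < momentP p ν)
    (hmomfin : momentP p ν < ∞) (hr : r ∈ Set.Ioc (0:ℝ) 1) :
    fApprox p ν r = gfun p ν r := by
  rw [fApprox, if_neg hmomfin.ne, graph_val hp hmom0 hmomfin hr, csSup_singleton]

end Value


section GEst
variable [IsProbabilityMeasure ν]

lemma C_anti {a b : ℝ} (hab : a ≤ b) : Ctau b ⊆ Ctau a := by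
  intro x hx
  rw [mem_C] at hx ⊢
  linarith

lemma I_union (hmomfin : momentP p ν < ∞) {A B : Set ℝ} (hB : MeasurableSet B)
    (hAB : Disjoint A B) : I p ν (A ∪ B) = I p ν A + I p ν B := by
  rw [I, J_union hB hAB, ENNReal.toReal_add (J_ne_top hmomfin _) (J_ne_top hmomfin _)]
  rfl

lemma nu_diff_toReal {A B : Set ℝ} (hA : MeasurableSet A) (hAB : A ⊆ B) :
    (ν (B \ A)).toReal = (ν B).toReal - (ν A).toReal := by
  rw [measure_diff hAB hA.nullMeasurableSet (measure_ne_top ν _),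
    ENNReal.toReal_sub_of_le (measure_mono hAB) (measure_ne_top ν _)]

lemma I_le_const' (hp : 0 < p) (hmomfin : momentP p ν < ∞) {s : Set ℝ} {c : ℝ}
    (hs : MeasurableSet s) (hc : 0 ≤ c) (h : ∀ x ∈ s, |x| ≤ c) :
    I p ν s ≤ c ^ p * (ν s).toReal := by
  have h1 := J_le_const (ν := ν) hp hs h
  have h2 := ENNReal.toReal_mono
    (ENNReal.mul_ne_top ENNReal.ofReal_ne_top (measure_ne_top ν _)) h1
  rwa [ENNReal.toReal_mul, ENNReal.toReal_ofReal (Real.rpow_nonneg hc p)] at h2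

lemma const_le_I' (hp : 0 < p) (hmomfin : momentP p ν < ∞) {s : Set ℝ} {c : ℝ}
    (hs : MeasurableSet s) (hc : 0 ≤ c) (h : ∀ x ∈ s, c ≤ |x|) :
    c ^ p * (ν s).toReal ≤ I p ν s := by
  have h1 := const_le_J (ν := ν) hp hc hs h
  have h2 := ENNReal.toReal_mono (J_ne_top hmomfin _) h1
  rwa [ENNReal.toReal_mul, ENNReal.toReal_ofReal (Real.rpow_nonneg hc p)] at h2

lemma G_diff_le (hp : 0 < p) (hmomfin : momentP p ν < ∞) {r₁ r₂ : ℝ}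
    (hr₁ : r₁ ∈ Set.Ioc (0:ℝ) 1) (hr₂ : r₂ ∈ Set.Ioc (0:ℝ) 1) (h12 : r₁ ≤ r₂) :
    G p ν r₂ - G p ν r₁ ≤ (tauR ν r₁) ^ p * (r₂ - r₁) := by
  set t₁ := tauR ν r₁ with ht₁
  set t₂ := tauR ν r₂ with ht₂
  have ht21 : t₂ ≤ t₁ := tau_antitone hr₁ hr₂ h12
  have ht₂0 : 0 ≤ t₂ := tau_nonneg hr₂
  have ht₁0 : 0 ≤ t₁ := le_trans ht₂0 ht21
  have hCsub : Ctau t₁ ⊆ Ctau t₂ := C_anti ht21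
  have hIsplit : I p ν (Ctau t₂) = I p ν (Ctau t₁) + I p ν (Ctau t₂ \ Ctau t₁) := by
    rw [← I_union hmomfin ((measC t₂).diff (measC t₁)) disjoint_sdiff_right,
      Set.union_diff_cancel hCsub]
  have hIdle : I p ν (Ctau t₂ \ Ctau t₁) ≤ t₁ ^ p *
      ((ν (Ctau t₂)).toReal - (ν (Ctau t₁)).toReal) := by
    rw [← nu_diff_toReal (measC t₁) hCsub]
    refine I_le_const' hp hmomfin ((measC t₂).diff (measC t₁)) ht₁0 ?_
    intro x hx
    have := hx.2
    rw [mem_C, not_lt] at this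
    exact this
  have hpow : t₂ ^ p ≤ t₁ ^ p := Real.rpow_le_rpow ht₂0 ht21 hp.le
  have hC2le : (ν (Ctau t₂)).toReal ≤ r₂ := nuC_le_r hr₂
  have hC1le : (ν (Ctau t₁)).toReal ≤ r₁ := nuC_le_r hr₁
  have hmul : (r₂ - (ν (Ctau t₂)).toReal) * t₂ ^ p ≤
      (r₂ - (ν (Ctau t₂)).toReal) * t₁ ^ p :=
    mul_le_mul_of_nonneg_left hpow (by linarith)
  rw [G, G, ← ht₁, ← ht₂]
  nlinarith

lemma le_G_diff (hp : 0 < p) (hmomfin : momentP p ν < ∞) {r₁ r₂ : ℝ}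
    (hr₁ : r₁ ∈ Set.Ioc (0:ℝ) 1) (hr₂ : r₂ ∈ Set.Ioc (0:ℝ) 1) (h12 : r₁ ≤ r₂) :
    (tauR ν r₂) ^ p * (r₂ - r₁) ≤ G p ν r₂ - G p ν r₁ := by
  set t₁ := tauR ν r₁ with ht₁
  set t₂ := tauR ν r₂ with ht₂
  have ht21 : t₂ ≤ t₁ := tau_antitone hr₁ hr₂ h12
  have ht₂0 : 0 ≤ t₂ := tau_nonneg hr₂
  have ht₁0 : 0 ≤ t₁ := le_trans ht₂0 ht21
  rcases eq_or_lt_of_le ht21 with heq | hlt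
  · rw [G, G, ← ht₁, ← ht₂, ← heq]
    have : (0:ℝ) ≤ t₂ ^ p := Real.rpow_nonneg ht₂0 p
    nlinarith
  · -- t₂ < t₁
    have hBsub : Btau t₁ ⊆ Ctau t₂ := by
      intro x hx
      rw [mem_B] at hx
      rw [mem_C]
      linarith
    have hIsplit : I p ν (Ctau t₂) = I p ν (Btau t₁) + I p ν (Ctau t₂ \ Btau t₁) := by
      rw [← I_union hmomfin ((measC t₂).diff (measB t₁)) disjoint_sdiff_right,
        Set.union_diff_cancel hBsub]
    have hIB : I p ν (Btau t₁) = I p ν (Ctau t₁) + t₁ ^ p * (ν ({-t₁, t₁} : Set ℝ)).toReal :=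
      I_B_split hp hmomfin ht₁0
    have hIdge : t₂ ^ p * ((ν (Ctau t₂)).toReal - (ν (Btau t₁)).toReal) ≤
        I p ν (Ctau t₂ \ Btau t₁) := by
      rw [← nu_diff_toReal (measB t₁) hBsub]
      refine const_le_I' hp hmomfin ((measC t₂).diff (measB t₁)) ht₂0 ?_
      intro x hx
      have := hx.1
      rw [mem_C] at this
      linarith
    have hpow : t₂ ^ p ≤ t₁ ^ p := Real.rpow_le_rpow ht₂0 ht21 hp.le
    have hpow0 : (0:ℝ) ≤ t₂ ^ p := Real.rpow_nonneg ht₂0 p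
    have hsplit1 := nu_B_split (ν := ν) ht₁0
    have hφ1 : r₁ ≤ (ν (Btau t₁)).toReal := r_le_phi_tau hr₁
    have hC1le : (ν (Ctau t₁)).toReal ≤ r₁ := nuC_le_r hr₁
    have hC2le : (ν (Ctau t₂)).toReal ≤ r₂ := nuC_le_r hr₂
    rw [G, G, ← ht₁, ← ht₂]
    nlinarith [mul_nonneg (sub_nonneg.mpr hpow) (sub_nonneg.mpr hφ1)]

lemma G_le_M (hp : 0 < p) (hmomfin : momentP p ν < ∞) {r : ℝ}
    (hr : r ∈ Set.Ioc (0:ℝ) 1) : G p ν r ≤ (momentP p ν).toReal := by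
  set t := tauR ν r with htdef
  have ht0 : 0 ≤ t := tau_nonneg hr
  have hφ : r ≤ (ν (Btau t)).toReal := r_le_phi_tau hr
  have hsplit := nu_B_split (ν := ν) ht0
  have hpow0 : (0:ℝ) ≤ t ^ p := Real.rpow_nonneg ht0 p
  have hIB : I p ν (Btau t) = I p ν (Ctau t) + t ^ p * (ν ({-t, t} : Set ℝ)).toReal :=
    I_B_split hp hmomfin ht0
  have h1 : G p ν r ≤ I p ν (Btau t) := by
    rw [G, ← htdef, hIB]
    have : (r - (ν (Ctau t)).toReal) * t ^ p ≤ (ν ({-t, t} : Set ℝ)).toReal * t ^ p :=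
      mul_le_mul_of_nonneg_right (by linarith) hpow0
    nlinarith
  exact h1.trans (I_le_M hmomfin _)

lemma C_zero_eq : Ctau (0:ℝ) = ({0}ᶜ : Set ℝ) := by
  ext x
  rw [mem_C]
  simp [abs_pos]

lemma J_singleton_zero (hp : 0 < p) : J p ν ({0} : Set ℝ) = 0 := by
  have h1 : ({-(0:ℝ), 0} : Set ℝ) = ({0} : Set ℝ) := by norm_num
  have h2 := J_D (p := p) (ν := ν) (le_refl (0:ℝ))
  rw [h1, Real.zero_rpow hp.ne', ENNReal.ofReal_zero, zero_mul] at h2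
  exact h2

lemma I_C_zero (hp : 0 < p) : I p ν (Ctau 0) = (momentP p ν).toReal := by
  have huniv : (Set.univ : Set ℝ) = Ctau 0 ∪ ({0} : Set ℝ) := by
    ext x
    simp only [Set.mem_univ, Set.mem_union, C_zero_eq, Set.mem_compl_iff,
      Set.mem_singleton_iff, true_iff]
    tauto
  have hdisj : Disjoint (Ctau 0) ({0} : Set ℝ) := by
    rw [Set.disjoint_left]
    intro x hx hx'
    rw [C_zero_eq] at hx
    exact hx hx'
  have := J_univ (p := p) (ν := ν)
  rw [huniv, J_union (measurableSet_singleton 0) hdisj, J_singleton_zero hp, add_zero] at this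
  rw [I, this]

lemma G_strict_mono (hp : 0 < p) (hmomfin : momentP p ν < ∞) {r₁ r₂ : ℝ}
    (hr₁ : r₁ ∈ Set.Ioc (0:ℝ) 1) (hr₂ : r₂ ∈ Set.Ioc (0:ℝ) 1) (h12 : r₁ < r₂)
    (h2ub : r₂ ≤ 1 - (ν ({0} : Set ℝ)).toReal) : G p ν r₁ < G p ν r₂ := by
  rcases eq_or_lt_of_le (tau_nonneg (ν := ν) hr₂) with ht₂0 | ht₂0
  · -- tauR ν r₂ = 0
    have hC0 : (ν (Ctau (tauR ν r₂))).toReal = 1 - (ν ({0} : Set ℝ)).toReal := by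
      rw [← ht₂0, C_zero_eq, prob_compl_eq_one_sub (measurableSet_singleton 0),
        ENNReal.toReal_sub_of_le prob_le_one ENNReal.one_ne_top, ENNReal.toReal_one]
    have hr₂eq : r₂ = (ν (Ctau (tauR ν r₂))).toReal :=
      le_antisymm (hC0 ▸ h2ub) (nuC_le_r hr₂)
    have hG₂ : G p ν r₂ = (momentP p ν).toReal := by
      rw [G, ← hr₂eq, sub_self, zero_mul, add_zero, ← ht₂0, I_C_zero hp]
    set t₁ := tauR ν r₁ with ht₁
    have ht₁0 : 0 < t₁ := by
      rcases eq_or_lt_of_le (tau_nonneg (ν := ν) hr₁) with h | h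
      · exfalso
        have := nuC_le_r (ν := ν) hr₁
        rw [← h] at this
        rw [← ht₂0] at hr₂eq
        linarith [hr₂eq]
      · exact h
    have hφ1lt : phiTail ν t₁ < r₂ := phi_lt_of_tau_lt hr₂ (by rw [← ht₂0]; exact ht₁0)
    -- s := Ctau 0 \ Btau t₁ has positive measure and positive integral
    have hBsub : Btau t₁ ⊆ Ctau 0 := by
      intro x hx
      rw [mem_B] at hx
      rw [mem_C]
      linarith
    set s := Ctau 0 \ Btau t₁ with hsdef
    have hsmeas : MeasurableSet s := (measC 0).diff (measB t₁)
    have hνs : (ν s).toReal = (ν (Ctau 0)).toReal - (ν (Btau t₁)).toReal :=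
      nu_diff_toReal (measB t₁) hBsub
    have hνspos : 0 < (ν s).toReal := by
      rw [hνs]
      have h1 : (ν (Ctau 0)).toReal = r₂ := by rw [← ht₂0] at hr₂eq; exact hr₂eq.symm
      rw [h1]
      rw [phiTail] at hφ1lt
      linarith
    have hJs : J p ν s ≠ 0 := by
      refine J_pos hp hsmeas ?_ ?_
      · intro x hx
        have := hx.1
        rw [C_zero_eq] at this
        exact this
      · intro h0
        rw [h0] at hνspos
        simp at hνspos
    have hIspos : 0 < I p ν s := ENNReal.toReal_pos hJs (J_ne_top hmomfin _)
    have hM_split : (momentP p ν).toReal = I p ν (Btau t₁) + I p ν s := by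
      rw [← I_C_zero (ν := ν) hp, ← I_union hmomfin hsmeas disjoint_sdiff_right,
        Set.union_diff_cancel hBsub]
    have hG₁ : G p ν r₁ ≤ I p ν (Btau t₁) := by
      have hφ : r₁ ≤ (ν (Btau t₁)).toReal := r_le_phi_tau hr₁
      have hsplit := nu_B_split (ν := ν) ht₁0.le
      have hpow0 : (0:ℝ) ≤ t₁ ^ p := Real.rpow_nonneg ht₁0.le p
      have hIB := I_B_split (ν := ν) hp hmomfin ht₁0.le
      rw [G, ← ht₁, hIB]
      have : (r₁ - (ν (Ctau t₁)).toReal) * t₁ ^ p ≤ (ν ({-t₁, t₁} : Set ℝ)).toReal * t₁ ^ p :=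
        mul_le_mul_of_nonneg_right (by linarith) hpow0
      nlinarith
    rw [hG₂]
    calc G p ν r₁ ≤ I p ν (Btau t₁) := hG₁
      _ < I p ν (Btau t₁) + I p ν s := by linarith
      _ = (momentP p ν).toReal := hM_split.symm
  · -- 0 < tauR ν r₂
    have hlow := le_G_diff hp hmomfin hr₁ hr₂ h12.le
    have hpos : 0 < (tauR ν r₂) ^ p * (r₂ - r₁) :=
      mul_pos (Real.rpow_pos_of_pos ht₂0 p) (by linarith)
    linarith

lemma G_continuousOn (hp : 0 < p) (hmomfin : momentP p ν < ∞) :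
    ContinuousOn (G p ν) (Set.Ioc (0:ℝ) 1) := by
  intro r₀ hr₀
  set c := r₀ / 2 with hcdef
  have hc0 : 0 < c := by
    have := hr₀.1
    positivity
  have hcr₀ : c < r₀ := by
    have := hr₀.1
    rw [hcdef]
    linarith
  have hc1 : c ∈ Set.Ioc (0:ℝ) 1 := ⟨hc0, by linarith [hr₀.2]⟩
  have hsub : Set.Icc c 1 ⊆ Set.Ioc (0:ℝ) 1 := fun x hx => ⟨lt_of_lt_of_le hc0 hx.1, hx.2⟩
  set K := (tauR ν c) ^ p with hKdef
  have hK0 : 0 ≤ K := Real.rpow_nonneg (tau_nonneg hc1) p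
  have hlip : LipschitzOnWith (Real.toNNReal K) (G p ν) (Set.Icc c 1) := by
    rw [lipschitzOnWith_iff_dist_le_mul]
    intro x hx y hy
    rw [Real.dist_eq, Real.dist_eq, Real.coe_toNNReal _ hK0]
    have hxm := hsub hx
    have hym := hsub hy
    wlog hxy : y ≤ x generalizing x y
    · rw [abs_sub_comm (G p ν x), abs_sub_comm x]
      exact this y hy x hx hym hxm (le_of_not_ge hxy)
    have h1 : 0 ≤ G p ν x - G p ν y := by
      have := le_G_diff hp hmomfin hym hxm hxy
      nlinarith [Real.rpow_nonneg (tau_nonneg (ν := ν) hxm) p]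
    have h2 : G p ν x - G p ν y ≤ K * (x - y) := by
      have h3 := G_diff_le hp hmomfin hym hxm hxy
      have h4 : (tauR ν y) ^ p ≤ K := by
        rw [hKdef]
        exact Real.rpow_le_rpow (tau_nonneg hym) (tau_antitone hc1 hym hy.1) hp.le
      have h5 : (tauR ν y) ^ p * (x - y) ≤ K * (x - y) :=
        mul_le_mul_of_nonneg_right h4 (by linarith)
      linarith
    rw [abs_of_nonneg h1, abs_of_nonneg (by linarith : (0:ℝ) ≤ x - y)]
    linarith
  have hcwa : ContinuousWithinAt (G p ν) (Set.Icc c 1) r₀ :=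
    hlip.continuousOn r₀ ⟨hcr₀.le, hr₀.2⟩
  refine hcwa.mono_of_mem_nhdsWithin ?_
  rw [mem_nhdsWithin]
  exact ⟨Set.Ioi c, isOpen_Ioi, hcr₀, fun x hx => ⟨hx.1.le, hx.2.2⟩⟩

end GEst

end FA


/-- Proposition 1 / Lemma 8 (i)-(ii): the approximation error function `f_{p,ν}` is
continuous on `(0,1]` and strictly decreasing on `(0, 1 − ν({0})]`. -/
theorem fApprox_continuous_strictAnti
    (p : ℝ) (hp : 0 < p) (ν : Measure ℝ) [IsProbabilityMeasure ν]
    (hmom0 : 0 < momentP p ν) (hmomfin : momentP p ν < ∞) :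
    ContinuousOn (fApprox p ν) (Set.Ioc (0:ℝ) 1) ∧
    ∀ r₁ r₂ : ℝ, 0 < r₁ → r₁ < r₂ → r₂ ≤ 1 - (ν ({0} : Set ℝ)).toReal →
      fApprox p ν r₂ < fApprox p ν r₁ := by
  have hM : 0 < (momentP p ν).toReal := ENNReal.toReal_pos hmom0.ne' hmomfin.ne
  constructor
  · -- continuity
    have heq : Set.EqOn (fApprox p ν) (FA.gfun p ν) (Set.Ioc (0:ℝ) 1) :=
      fun r hr => FA.fApprox_eq hp hmom0 hmomfin hr
    refine ContinuousOn.congr ?_ heq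
    intro r hr
    have hG := FA.G_continuousOn hp hmomfin r hr
    have hinner : ContinuousWithinAt
        (fun r => 1 - FA.G p ν r / (momentP p ν).toReal) (Set.Ioc (0:ℝ) 1) r :=
      continuousWithinAt_const.sub (hG.div_const _)
    exact hinner.rpow_const (Or.inr (by positivity))
  · intro r₁ r₂ h0 h12 h2ub
    have hν0 : (0:ℝ) ≤ (ν ({0} : Set ℝ)).toReal := ENNReal.toReal_nonneg
    have hr₂ : r₂ ∈ Set.Ioc (0:ℝ) 1 := ⟨h0.trans h12, by linarith⟩
    have hr₁ : r₁ ∈ Set.Ioc (0:ℝ) 1 := ⟨h0, by linarith [hr₂.2]⟩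
    rw [FA.fApprox_eq hp hmom0 hmomfin hr₁, FA.fApprox_eq hp hmom0 hmomfin hr₂,
      FA.gfun, FA.gfun]
    have hG12 : FA.G p ν r₁ < FA.G p ν r₂ := FA.G_strict_mono hp hmomfin hr₁ hr₂ h12 h2ub
    have h2M : FA.G p ν r₂ ≤ (momentP p ν).toReal := FA.G_le_M hp hmomfin hr₂
    apply Real.rpow_lt_rpow
    · have h1 : FA.G p ν r₂ / (momentP p ν).toReal ≤ 1 := (div_le_one hM).mpr h2M
      linarith
    · have h2 : FA.G p ν r₁ / (momentP p ν).toReal <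
          FA.G p ν r₂ / (momentP p ν).toReal := by gcongr
      linarith
    · positivity

end
end

section
/- Let p > 0 and let ν be a probability measure on ℝ with 0 < ∫_ℝ |x|^p dν(x) < ∞. Then the approximation error function f_{p,ν} satisfies: f_{p,ν}(r) = 0 for every r ∈ [1 − ν({0}), 1]; lim_{r→0⁺} f_{p,ν}(r) = 1; the range of f_{p,ν} on (0,1] is exactly [0,1); and the preimage f_{p,ν}^{-1}((0,1)) equals the interval (0, 1 − ν({0})). -/
open MeasureTheory Filter Set
open scoped ENNReal Topology Classical

noncomputable section

namespace FApproxAux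

variable {p : ℝ} {ν : Measure ℝ}

/-- The density `x ↦ |x|^p` as an `ℝ≥0∞`-valued function. -/
def gfun (p : ℝ) : ℝ → ℝ≥0∞ := fun x => ENNReal.ofReal (|x| ^ p)

lemma measurable_gfun (p : ℝ) : Measurable (gfun p) :=
  (measurable_id.abs.pow_const p).ennreal_ofReal

/-- The weighted measure `ρ = |x|^p dν`. -/
def rho (p : ℝ) (ν : Measure ℝ) : Measure ℝ := ν.withDensity (gfun p)

lemma meas_Btau (τ : ℝ) : MeasurableSet (Btau τ) :=
  measurableSet_Iic.union measurableSet_Ici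

lemma meas_Ctau (τ : ℝ) : MeasurableSet (Ctau τ) :=
  measurableSet_Iio.union measurableSet_Ioi

lemma mem_Btau {τ x : ℝ} : x ∈ Btau τ ↔ τ ≤ |x| := by
  simp [Btau, abs_le' (a := x) (b := |x|), le_abs, le_neg]
  constructor
  · rintro (h | h); · right; linarith
    · left; exact h
  · rintro (h | h); · right; exact h
    · left; linarith

lemma mem_Ctau {τ x : ℝ} : x ∈ Ctau τ ↔ τ < |x| := by
  simp [Ctau, lt_abs]
  constructor
  · rintro (h | h); · right; linarith
    · left; exact h
  · rintro (h | h); · right; exact h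
    · left; linarith

lemma Btau_zero : Btau 0 = univ := by
  ext x; simp [mem_Btau]

lemma Btau_eq_union (τ : ℝ) : Btau τ = Ctau τ ∪ ({-τ, τ} : Set ℝ) := by
  ext x
  simp only [mem_Btau, mem_Ctau, Set.mem_union, Set.mem_insert_iff, Set.mem_singleton_iff]
  constructor
  · intro h
    rcases lt_or_eq_of_le h with h | h
    · exact Or.inl h
    · have hτ : 0 ≤ τ := h ▸ abs_nonneg x
      rcases (abs_eq hτ).mp h.symm with h | h
      · exact Or.inr (Or.inr h)
      · exact Or.inr (Or.inl h)
  · rintro (h | h | h)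
    · exact h.le
    · subst h; rw [abs_neg]; exact le_abs_self τ
    · subst h; exact le_abs_self x

lemma Btau_anti {τ τ' : ℝ} (h : τ ≤ τ') : Btau τ' ⊆ Btau τ := fun x hx =>
  mem_Btau.mpr (h.trans (mem_Btau.mp hx))

lemma Ctau_subset_Btau (τ : ℝ) : Ctau τ ⊆ Btau τ := fun x hx =>
  mem_Btau.mpr (mem_Ctau.mp hx).le

lemma Btau_subset_Ctau {τ τ' : ℝ} (h : τ < τ') : Btau τ' ⊆ Ctau τ := fun x hx =>
  mem_Ctau.mpr (h.trans_le (mem_Btau.mp hx))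

lemma Ctau_anti {τ τ' : ℝ} (h : τ ≤ τ') : Ctau τ' ⊆ Ctau τ := fun x hx =>
  mem_Ctau.mpr (h.trans_lt (mem_Ctau.mp hx))

lemma meas_pair (τ : ℝ) : MeasurableSet ({-τ, τ} : Set ℝ) :=
  (measurableSet_singleton τ).insert (-τ)

lemma disjoint_Ctau_pair {τ : ℝ} (hτ : 0 ≤ τ) : Disjoint (Ctau τ) ({-τ, τ} : Set ℝ) := by
  rw [Set.disjoint_left]
  rintro x hx (rfl | rfl)
  · rw [mem_Ctau, abs_neg, abs_of_nonneg hτ] at hx; exact lt_irrefl _ hx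
  · rw [mem_Ctau, abs_of_nonneg hτ] at hx; exact lt_irrefl _ hx

lemma measure_Btau_split (μ : Measure ℝ) {τ : ℝ} (hτ : 0 ≤ τ) :
    μ (Btau τ) = μ (Ctau τ) + μ ({-τ, τ} : Set ℝ) := by
  rw [Btau_eq_union τ, measure_union (disjoint_Ctau_pair hτ) (meas_pair τ)]

lemma measure_Btau_split_toReal (μ : Measure ℝ) [IsFiniteMeasure μ] {τ : ℝ} (hτ : 0 ≤ τ) :
    (μ (Btau τ)).toReal = (μ (Ctau τ)).toReal + (μ ({-τ, τ} : Set ℝ)).toReal := by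
  rw [measure_Btau_split μ hτ, ENNReal.toReal_add (measure_ne_top μ _) (measure_ne_top μ _)]

lemma momentP_eq_lintegral_gfun : momentP p ν = ∫⁻ x, gfun p x ∂ν := rfl

lemma rho_univ : rho p ν univ = momentP p ν := by
  rw [rho, withDensity_apply _ MeasurableSet.univ, Measure.restrict_univ, momentP_eq_lintegral_gfun]

lemma rho_le_moment (s : Set ℝ) : rho p ν s ≤ momentP p ν :=
  rho_univ ▸ measure_mono (subset_univ s)

lemma rho_finite (hfin : momentP p ν ≠ ∞) : IsFiniteMeasure (rho p ν) :=
  isFiniteMeasure_withDensity (by rw [← momentP_eq_lintegral_gfun]; exact hfin)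

lemma vP_eq {s : Set ℝ} (hs : MeasurableSet s) :
    vP p ν s = (rho p ν s).toReal / (momentP p ν).toReal := by
  rw [vP, ← ENNReal.toReal_div, rho, withDensity_apply _ hs]; rfl

lemma rho_singleton_zero (hp : 0 < p) : rho p ν ({0} : Set ℝ) = 0 := by
  rw [rho, withDensity_apply _ (measurableSet_singleton 0), lintegral_singleton]
  simp [gfun, Real.zero_rpow hp.ne']

lemma rho_pair {τ : ℝ} (hτ : 0 < τ) :
    rho p ν ({-τ, τ} : Set ℝ) = ENNReal.ofReal (τ ^ p) * ν ({-τ, τ} : Set ℝ) := by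
  rw [rho, withDensity_apply _ (meas_pair τ)]
  have hcg : ∀ᵐ x ∂ν, x ∈ ({-τ, τ} : Set ℝ) → gfun p x = (fun _ => ENNReal.ofReal (τ ^ p)) x := by
    refine ae_of_all ν ?_
    rintro x (rfl | rfl)
    · simp [gfun, abs_of_pos hτ]
    · simp [gfun, abs_of_pos hτ]
  rw [setLIntegral_congr_fun_ae (meas_pair τ) hcg, setLIntegral_const]

lemma rho_zero_of_null {s : Set ℝ} (h : ν s = 0) : rho p ν s = 0 :=
  withDensity_absolutelyContinuous ν (gfun p) h

lemma rho_pos {s : Set ℝ} (hp : 0 < p) (hs : MeasurableSet s) (h0 : ∀ x ∈ s, x ≠ 0)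
    (hν : ν s ≠ 0) : rho p ν s ≠ 0 := by
  rw [rho, Ne, withDensity_apply_eq_zero (measurable_gfun p)]
  intro h
  apply hν
  have hsub : s ⊆ {x | gfun p x ≠ 0} ∩ s := fun x hx => by
    refine ⟨?_, hx⟩
    simp only [Set.mem_setOf_eq, gfun, Ne, ENNReal.ofReal_eq_zero, not_le]
    exact Real.rpow_pos_of_pos (abs_pos.mpr (h0 x hx)) p
  exact measure_mono_null hsub h

lemma rho_eq_of_subset {s t : Set ℝ} [IsFiniteMeasure ν] (hst : s ⊆ t) (hs : MeasurableSet s)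
    (h : ν t ≤ ν s) : rho p ν t = rho p ν s := by
  have hd : ν (t \ s) = 0 := by
    rw [measure_diff hst hs.nullMeasurableSet (measure_ne_top ν s)]
    exact tsub_eq_zero_of_le h
  refine le_antisymm ?_ (measure_mono hst)
  calc rho p ν t ≤ rho p ν (s ∪ (t \ s)) :=
        measure_mono (fun x hx => by by_cases h' : x ∈ s; exacts [Or.inl h', Or.inr ⟨hx, h'⟩])
    _ ≤ rho p ν s + rho p ν (t \ s) := measure_union_le _ _
    _ = rho p ν s := by rw [rho_zero_of_null hd, add_zero]

lemma exists_tau (μ : Measure ℝ) [IsFiniteMeasure μ] {c : ℝ≥0∞} (hc0 : c ≠ 0)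
    (hc : c ≤ μ univ) : ∃ τ : ℝ, 0 ≤ τ ∧ μ (Ctau τ) ≤ c ∧ c ≤ μ (Btau τ) := by
  have htop : Tendsto (fun n : ℕ => μ (Btau n)) atTop (𝓝 (μ (⋂ n : ℕ, Btau n))) :=
    tendsto_measure_iInter_atTop (fun n => (meas_Btau _).nullMeasurableSet)
      (fun a b hab => Btau_anti (by exact_mod_cast hab)) ⟨0, measure_ne_top μ _⟩
  have hIempty : ⋂ n : ℕ, Btau (n : ℝ) = ∅ := by
    ext x
    simp only [Set.mem_iInter, mem_Btau, Set.mem_empty_iff_false, iff_false]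
    push_neg
    obtain ⟨n, hn⟩ := exists_nat_gt |x|
    exact ⟨n, hn⟩
  rw [hIempty, measure_empty] at htop
  obtain ⟨N, hN⟩ : ∃ n : ℕ, μ (Btau n) < c :=
    (htop.eventually (gt_mem_nhds (pos_iff_ne_zero.2 hc0))).exists
  set S := {τ : ℝ | 0 ≤ τ ∧ c ≤ μ (Btau τ)} with hSdef
  have hS0 : (0 : ℝ) ∈ S := ⟨le_refl 0, by rw [Btau_zero]; exact hc⟩
  have hSbdd : BddAbove S := by
    refine ⟨N, fun τ hτ => ?_⟩
    by_contra h
    push_neg at h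
    exact absurd (hτ.2.trans (measure_mono (Btau_anti h.le))) (not_le.mpr hN)
  set τ₀ := sSup S with hτ₀def
  have hτ₀0 : 0 ≤ τ₀ := le_csSup hSbdd hS0
  refine ⟨τ₀, hτ₀0, ?_, ?_⟩
  · have hmono : Monotone (fun n : ℕ => Btau (τ₀ + 1 / (n + 1))) := by
      intro a b hab
      refine Btau_anti (add_le_add_right ?_ τ₀)
      have : (a : ℝ) + 1 ≤ (b : ℝ) + 1 := by exact_mod_cast add_le_add_left (Nat.cast_le.mpr hab) 1
      exact one_div_le_one_div_of_le (by positivity) this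
    have hU : ⋃ n : ℕ, Btau (τ₀ + 1 / (n + 1)) = Ctau τ₀ := by
      ext x
      simp only [Set.mem_iUnion, mem_Btau, mem_Ctau]
      constructor
      · rintro ⟨n, hn⟩
        have h1 : (0 : ℝ) < 1 / (n + 1) := by positivity
        linarith
      · intro hx
        obtain ⟨n, hn⟩ := exists_nat_one_div_lt (sub_pos.mpr hx)
        exact ⟨n, by push_cast at hn ⊢; linarith⟩
    have hten := tendsto_measure_iUnion_atTop (μ := μ) hmono
    rw [hU] at hten
    refine le_of_tendsto hten (Eventually.of_forall fun n => ?_)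
    by_contra h
    push_neg at h
    have hmem : τ₀ + 1 / (n + 1) ∈ S := ⟨by positivity, h.le⟩
    have hle := le_csSup hSbdd hmem
    have h1 : (0 : ℝ) < 1 / ((n : ℝ) + 1) := by positivity
    linarith
  · rcases eq_or_lt_of_le hτ₀0 with h0 | h0
    · rw [← h0, Btau_zero]; exact hc
    · have hmono : Antitone (fun n : ℕ => Btau (τ₀ - τ₀ / (n + 1))) := by
        intro a b hab
        refine Btau_anti (sub_le_sub_left ?_ τ₀)
        have h1 : (a : ℝ) + 1 ≤ (b : ℝ) + 1 := by
          exact_mod_cast add_le_add_left (Nat.cast_le.mpr hab) 1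
        exact div_le_div_of_nonneg_left h0.le (by positivity) h1
      have hI : ⋂ n : ℕ, Btau (τ₀ - τ₀ / (n + 1)) = Btau τ₀ := by
        ext x
        simp only [Set.mem_iInter, mem_Btau]
        constructor
        · intro h
          by_contra hlt
          push_neg at hlt
          obtain ⟨n, hn⟩ := exists_nat_one_div_lt (show 0 < (τ₀ - |x|) / τ₀ from div_pos (by linarith) h0)
          have h2 := h n
          have h3 : τ₀ / ((n : ℝ) + 1) = τ₀ * (1 / ((n : ℝ) + 1)) := by ring
          have h4 : τ₀ * (1 / ((n : ℝ) + 1)) < τ₀ * ((τ₀ - |x|) / τ₀) :=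
            mul_lt_mul_of_pos_left hn h0
          rw [mul_div_cancel₀ _ h0.ne'] at h4
          rw [h3] at h2
          linarith
        · intro h n
          have h1 : 0 ≤ τ₀ / ((n : ℝ) + 1) := by positivity
          linarith
      have hten := tendsto_measure_iInter_atTop (μ := μ)
        (fun n => (meas_Btau _).nullMeasurableSet) hmono ⟨0, measure_ne_top μ _⟩
      rw [hI] at hten
      refine ge_of_tendsto hten (Eventually.of_forall fun n => ?_)
      have hlt : τ₀ - τ₀ / (n + 1) < τ₀ := by
        have : (0 : ℝ) < τ₀ / ((n : ℝ) + 1) := by positivity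
        linarith
      obtain ⟨s, hsS, hs⟩ := exists_lt_of_lt_csSup ⟨0, hS0⟩ hlt
      exact hsS.2.trans (measure_mono (Btau_anti hs.le))

lemma vP_nonneg (s : Set ℝ) : 0 ≤ vP p ν s := ENNReal.toReal_nonneg

lemma toReal_measure_mono (μ : Measure ℝ) [IsFiniteMeasure μ] {s t : Set ℝ} (h : s ⊆ t) :
    (μ s).toReal ≤ (μ t).toReal :=
  ENNReal.toReal_mono (measure_ne_top μ t) (measure_mono h)

lemma measure_le_of_toReal_le (μ : Measure ℝ) [IsFiniteMeasure μ] {s t : Set ℝ}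
    (h : (μ s).toReal ≤ (μ t).toReal) : μ s ≤ μ t :=
  (ENNReal.toReal_le_toReal (measure_ne_top μ s) (measure_ne_top μ t)).mp h

section Main

variable [IsProbabilityMeasure ν]

lemma moment_toReal_pos (hmom0 : 0 < momentP p ν) (hmomfin : momentP p ν < ∞) :
    0 < (momentP p ν).toReal :=
  ENNReal.toReal_pos hmom0.ne' hmomfin.ne

lemma vP_le_one (hmom0 : 0 < momentP p ν) (hmomfin : momentP p ν < ∞) {s : Set ℝ}
    (hs : MeasurableSet s) : vP p ν s ≤ 1 := by
  rw [vP_eq hs, div_le_one (moment_toReal_pos hmom0 hmomfin)]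
  exact ENNReal.toReal_mono hmomfin.ne (rho_le_moment s)

lemma vP_pair_add (hmom0 : 0 < momentP p ν) (hmomfin : momentP p ν < ∞) {τ : ℝ} (hτ : 0 ≤ τ) :
    vP p ν (Btau τ) = vP p ν (Ctau τ) + vP p ν ({-τ, τ} : Set ℝ) := by
  haveI := rho_finite (p := p) (ν := ν) hmomfin.ne
  rw [vP_eq (meas_Btau τ), vP_eq (meas_Ctau τ), vP_eq (meas_pair τ),
    measure_Btau_split_toReal (rho p ν) hτ, add_div]

lemma vP_eq_one_of_compl_null (hmom0 : 0 < momentP p ν) (hmomfin : momentP p ν < ∞)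
    {s : Set ℝ} (hs : MeasurableSet s) (h : rho p ν sᶜ = 0) : vP p ν s = 1 := by
  have h1 : rho p ν s = momentP p ν := by
    refine le_antisymm (rho_le_moment s) ?_
    rw [← rho_univ]
    calc rho p ν univ = rho p ν (s ∪ sᶜ) := by rw [Set.union_compl_self]
      _ ≤ rho p ν s + rho p ν sᶜ := measure_union_le _ _
      _ = rho p ν s := by rw [h, add_zero]
  rw [vP_eq hs, h1, div_self (moment_toReal_pos hmom0 hmomfin).ne']

lemma uniq_AA (hmom0 : 0 < momentP p ν) (hmomfin : momentP p ν < ∞) {τ₁ τ₂ : ℝ}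
    (h12 : τ₁ ≤ τ₂) (hφ : phiTail ν τ₁ = phiTail ν τ₂) :
    vP p ν (Btau τ₁) = vP p ν (Btau τ₂) := by
  have hsub : Btau τ₂ ⊆ Btau τ₁ := Btau_anti h12
  have hle : ν (Btau τ₁) ≤ ν (Btau τ₂) := measure_le_of_toReal_le ν (le_of_eq hφ)
  rw [vP_eq (meas_Btau τ₁), vP_eq (meas_Btau τ₂),
    rho_eq_of_subset hsub (meas_Btau τ₂) hle]

lemma graph_singleValued (hp : 0 < p) (hmom0 : 0 < momentP p ν) (hmomfin : momentP p ν < ∞)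
    {r d₁ d₂ : ℝ} (h1 : (r, d₁) ∈ Fgraph p ν) (h2 : (r, d₂) ∈ Fgraph p ν) : d₁ = d₂ := by
  have keyAB : ∀ τ₁ τ₂ α : ℝ, 0 ≤ τ₂ → 0 < (ν ({-τ₂, τ₂} : Set ℝ)).toReal →
      0 ≤ α → α < 1 → phiTail ν τ₁ = (ν (Ctau τ₂)).toReal + α * (ν ({-τ₂, τ₂} : Set ℝ)).toReal →
      (1 - vP p ν (Btau τ₁)) ^ (1/p) =
        (1 - vP p ν (Ctau τ₂) - α * vP p ν ({-τ₂, τ₂} : Set ℝ)) ^ (1/p) := by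
    intro τ₁ τ₂ α hτ₂ hj hα0 hα1 hr
    have hsplit := measure_Btau_split_toReal ν hτ₂
    have hφψ : phiTail ν τ₁ < phiTail ν τ₂ := by
      have : α * (ν ({-τ₂, τ₂} : Set ℝ)).toReal < (ν ({-τ₂, τ₂} : Set ℝ)).toReal := by
        nlinarith
      unfold phiTail at *
      rw [hsplit]
      linarith [hr]
    have h21 : τ₂ < τ₁ := by
      by_contra h
      push_neg at h
      exact absurd (toReal_measure_mono ν (Btau_anti h)) (not_le.mpr hφψ)
    have hsub : Btau τ₁ ⊆ Ctau τ₂ := Btau_subset_Ctau h21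
    have hle1 : phiTail ν τ₁ ≤ (ν (Ctau τ₂)).toReal := toReal_measure_mono ν hsub
    have hα0' : α * (ν ({-τ₂, τ₂} : Set ℝ)).toReal = 0 := by nlinarith [hr, hle1]
    have hαz : α = 0 := by
      rcases mul_eq_zero.mp hα0' with h | h
      · exact h
      · exact absurd h hj.ne'
    have hψr : (ν (Ctau τ₂)).toReal = phiTail ν τ₁ := by rw [hr, hα0', add_zero]
    have hle : ν (Ctau τ₂) ≤ ν (Btau τ₁) := measure_le_of_toReal_le ν (le_of_eq hψr)
    have hrho : rho p ν (Ctau τ₂) = rho p ν (Btau τ₁) :=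
      rho_eq_of_subset hsub (meas_Btau τ₁) hle
    rw [hαz, zero_mul, sub_zero, vP_eq (meas_Btau τ₁), vP_eq (meas_Ctau τ₂), hrho]
  rcases h1 with ⟨τ₁, hτ₁, heq₁⟩ | ⟨τ₁, hτ₁, hj₁, α₁, hα₁, heq₁⟩ <;>
    rcases h2 with ⟨τ₂, hτ₂, heq₂⟩ | ⟨τ₂, hτ₂, hj₂, α₂, hα₂, heq₂⟩ <;>
      simp only [Prod.mk.injEq] at heq₁ heq₂ <;>
        obtain ⟨hr₁, hd₁⟩ := heq₁ <;> obtain ⟨hr₂, hd₂⟩ := heq₂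
  · -- type1 / type1
    rcases le_total τ₁ τ₂ with h | h
    · rw [hd₁, hd₂, uniq_AA hmom0 hmomfin h (hr₁.symm.trans hr₂)]
    · rw [hd₁, hd₂, uniq_AA hmom0 hmomfin h (hr₂.symm.trans hr₁)]
  · -- type1 / type2
    rw [hd₁, hd₂]
    exact keyAB τ₁ τ₂ α₂ hτ₂ hj₂ hα₂.1 hα₂.2 (by rw [← hr₁]; exact hr₂)
  · -- type2 / type1
    rw [hd₁, hd₂]
    exact (keyAB τ₂ τ₁ α₁ hτ₁ hj₁ hα₁.1 hα₁.2 (by rw [← hr₂]; exact hr₁)).symm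
  · -- type2 / type2
    have keyBB : ∀ τ τ' β β' : ℝ, 0 ≤ τ → 0 ≤ τ' → 0 < (ν ({-τ', τ'} : Set ℝ)).toReal →
        0 ≤ β → β' < 1 →
        (ν (Ctau τ)).toReal + β * (ν ({-τ, τ} : Set ℝ)).toReal =
          (ν (Ctau τ')).toReal + β' * (ν ({-τ', τ'} : Set ℝ)).toReal → ¬ τ < τ' := by
      intro τ τ' β β' hτ hτ' hj' hβ0 hβ'1 hrr hlt
      have h1 : (ν (Btau τ')).toReal ≤ (ν (Ctau τ)).toReal :=
        toReal_measure_mono ν (Btau_subset_Ctau hlt)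
      have hsplit := measure_Btau_split_toReal ν hτ'
      have h2 : 0 ≤ β * (ν ({-τ, τ} : Set ℝ)).toReal := by positivity
      nlinarith
    have hττ : τ₁ = τ₂ := by
      rcases lt_trichotomy τ₁ τ₂ with h | h | h
      · exact absurd h (keyBB τ₁ τ₂ α₁ α₂ hτ₁ hτ₂ hj₂ hα₁.1 hα₂.2 (by rw [← hr₁]; exact hr₂))
      · exact h
      · exact absurd h (keyBB τ₂ τ₁ α₂ α₁ hτ₂ hτ₁ hj₁ hα₂.1 hα₁.2 (by rw [← hr₂]; exact hr₁))
    subst hττ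
    have hαα : α₁ = α₂ := by
      have := hr₁.symm.trans hr₂
      have h' : α₁ * (ν ({-τ₁, τ₁} : Set ℝ)).toReal = α₂ * (ν ({-τ₁, τ₁} : Set ℝ)).toReal := by
        linarith
      exact mul_right_cancel₀ hj₁.ne' h'
    rw [hd₁, hd₂, hαα]

lemma fApprox_eq_of_mem (hp : 0 < p) (hmom0 : 0 < momentP p ν) (hmomfin : momentP p ν < ∞)
    {r d : ℝ} (h : (r, d) ∈ Fgraph p ν) : fApprox p ν r = d := by
  rw [fApprox, if_neg hmomfin.ne]
  have hset : {x : ℝ | (r, x) ∈ Fgraph p ν} = {d} :=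
    Set.eq_singleton_iff_unique_mem.mpr
      ⟨h, fun x hx => graph_singleValued hp hmom0 hmomfin hx h⟩
  rw [hset, csSup_singleton]

end Main

lemma compl_Btau (τ : ℝ) : (Btau τ)ᶜ = Ioo (-τ) τ := by
  ext x
  simp only [Set.mem_compl_iff, mem_Btau, Set.mem_Ioo, not_le, ← abs_lt]

lemma compl_Ctau (τ : ℝ) : (Ctau τ)ᶜ = Icc (-τ) τ := by
  ext x
  simp only [Set.mem_compl_iff, mem_Ctau, Set.mem_Icc, not_lt, ← abs_le]

lemma Ctau_zero : Ctau 0 = ({0}ᶜ : Set ℝ) := by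
  ext x
  simp [mem_Ctau, abs_pos]

lemma pair_zero : ({-0, 0} : Set ℝ) = {0} := by
  norm_num

lemma Icc_split {τ : ℝ} (hτ : 0 < τ) :
    Icc (-τ) τ = Ioo (-τ) τ ∪ ({-τ, τ} : Set ℝ) := by
  ext x
  simp only [Set.mem_Icc, Set.mem_union, Set.mem_Ioo, Set.mem_insert_iff,
    Set.mem_singleton_iff, ← abs_le, ← abs_lt]
  constructor
  · intro h
    rcases lt_or_eq_of_le h with h | h
    · exact Or.inl h
    · rcases (abs_eq hτ.le).mp h with h | h
      · exact Or.inr (Or.inr h)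
      · exact Or.inr (Or.inl h)
  · rintro (h | h | h)
    · exact h.le
    · rw [h, abs_neg, abs_of_pos hτ]
    · rw [h, abs_of_pos hτ]

lemma disjoint_Ioo_pair {τ : ℝ} (hτ : 0 < τ) :
    Disjoint (Ioo (-τ) τ) ({-τ, τ} : Set ℝ) := by
  rw [Set.disjoint_left]
  rintro x hx (rfl | rfl) <;> simp only [Set.mem_Ioo] at hx <;> linarith [hx.1, hx.2]

lemma measure_Icc_split_toReal (μ : Measure ℝ) [IsFiniteMeasure μ] {τ : ℝ} (hτ : 0 < τ) :
    (μ (Icc (-τ) τ)).toReal = (μ (Ioo (-τ) τ)).toReal + (μ ({-τ, τ} : Set ℝ)).toReal := by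
  rw [Icc_split hτ, measure_union (disjoint_Ioo_pair hτ) (meas_pair τ),
    ENNReal.toReal_add (measure_ne_top μ _) (measure_ne_top μ _)]

lemma toReal_measure_diff (μ : Measure ℝ) [IsFiniteMeasure μ] {s t : Set ℝ} (h : t ⊆ s)
    (ht : MeasurableSet t) : (μ (s \ t)).toReal = (μ s).toReal - (μ t).toReal := by
  rw [measure_diff h ht.nullMeasurableSet (measure_ne_top μ t),
    ENNReal.toReal_sub_of_le (measure_mono h) (measure_ne_top μ s)]

section Main2

variable [IsProbabilityMeasure ν]

lemma compl_toReal {s : Set ℝ} (hs : MeasurableSet s) :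
    (ν sᶜ).toReal = 1 - (ν s).toReal := by
  rw [measure_compl hs (measure_ne_top ν s), measure_univ,
    ENNReal.toReal_sub_of_le prob_le_one ENNReal.one_ne_top, ENNReal.toReal_one]

lemma rho_compl_toReal (hmomfin : momentP p ν < ∞) {s : Set ℝ} (hs : MeasurableSet s) :
    (rho p ν sᶜ).toReal = (momentP p ν).toReal - (rho p ν s).toReal := by
  haveI := rho_finite (p := p) (ν := ν) hmomfin.ne
  have h := measure_add_measure_compl (μ := rho p ν) hs
  rw [rho_univ] at h
  have := ENNReal.toReal_add (measure_ne_top (rho p ν) s) (measure_ne_top (rho p ν) sᶜ)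
  rw [h] at this
  linarith [this]

lemma typeB_base_nonneg (hmom0 : 0 < momentP p ν) (hmomfin : momentP p ν < ∞) {τ α : ℝ}
    (hτ : 0 ≤ τ) (hα : 0 ≤ α) (hα1 : α ≤ 1) :
    0 ≤ 1 - vP p ν (Ctau τ) - α * vP p ν ({-τ, τ} : Set ℝ) := by
  have hadd := vP_pair_add hmom0 hmomfin hτ
  have h1 := vP_le_one hmom0 hmomfin (meas_Btau τ)
  have h2 := vP_nonneg (p := p) (ν := ν) ({-τ, τ} : Set ℝ)
  nlinarith

lemma graph_d_mem (hp : 0 < p) (hmom0 : 0 < momentP p ν) (hmomfin : momentP p ν < ∞)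
    {r d : ℝ} (h : (r, d) ∈ Fgraph p ν) : 0 ≤ d ∧ d ≤ 1 := by
  have h1p : (0:ℝ) ≤ 1 / p := by positivity
  rcases h with ⟨τ, hτ, heq⟩ | ⟨τ, hτ, hj, α, hα, heq⟩ <;>
    simp only [Prod.mk.injEq] at heq <;> obtain ⟨hr, hd⟩ := heq
  · have h0 : 0 ≤ 1 - vP p ν (Btau τ) := by
      linarith [vP_le_one hmom0 hmomfin (meas_Btau τ)]
    have h1 : 1 - vP p ν (Btau τ) ≤ 1 := by linarith [vP_nonneg (p := p) (ν := ν) (Btau τ)]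
    exact ⟨hd ▸ Real.rpow_nonneg h0 _, hd ▸ Real.rpow_le_one h0 h1 h1p⟩
  · have h0 := typeB_base_nonneg hmom0 hmomfin hτ hα.1 hα.2.le
    have h1 : 1 - vP p ν (Ctau τ) - α * vP p ν ({-τ, τ} : Set ℝ) ≤ 1 := by
      have := vP_nonneg (p := p) (ν := ν) (Ctau τ)
      have h2 := vP_nonneg (p := p) (ν := ν) ({-τ, τ} : Set ℝ)
      nlinarith [hα.1]
    exact ⟨hd ▸ Real.rpow_nonneg h0 _, hd ▸ Real.rpow_le_one h0 h1 h1p⟩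

lemma vP_pos (hmom0 : 0 < momentP p ν) (hmomfin : momentP p ν < ∞)
    {s : Set ℝ} (hs : MeasurableSet s) (h : rho p ν s ≠ 0) : 0 < vP p ν s := by
  rw [vP_eq hs]
  exact div_pos (ENNReal.toReal_pos h ((rho_le_moment s).trans_lt hmomfin).ne)
    (moment_toReal_pos hmom0 hmomfin)

lemma vP_Ctau_zero (hp : 0 < p) (hmom0 : 0 < momentP p ν) (hmomfin : momentP p ν < ∞) :
    vP p ν (Ctau 0) = 1 := by
  refine vP_eq_one_of_compl_null hmom0 hmomfin (meas_Ctau 0) ?_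
  rw [Ctau_zero, compl_compl]
  exact rho_singleton_zero hp

lemma graph_d_lt_one (hp : 0 < p) (hmom0 : 0 < momentP p ν) (hmomfin : momentP p ν < ∞)
    {r d : ℝ} (h : (r, d) ∈ Fgraph p ν) (hr : 0 < r) : d < 1 := by
  have h1p : (0:ℝ) < 1 / p := by positivity
  rcases h with ⟨τ, hτ, heq⟩ | ⟨τ, hτ, hj, α, hα, heq⟩ <;>
    simp only [Prod.mk.injEq] at heq <;> obtain ⟨hrr, hd⟩ := heq
  · -- type 1
    have hρ : rho p ν (Btau τ) ≠ 0 := by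
      rcases eq_or_lt_of_le hτ with h0 | h0
      · rw [← h0, Btau_zero, rho_univ]; exact hmom0.ne'
      · refine rho_pos hp (meas_Btau τ) (fun x hx hx0 => ?_) ?_
        · rw [mem_Btau, hx0, abs_zero] at hx; linarith
        · intro hν0
          rw [hrr] at hr
          unfold phiTail at hr
          rw [hν0] at hr
          simp at hr
    have hv := vP_pos hmom0 hmomfin (meas_Btau τ) hρ
    have h0 : 0 ≤ 1 - vP p ν (Btau τ) := by
      linarith [vP_le_one hmom0 hmomfin (meas_Btau τ)]
    rw [hd]
    exact Real.rpow_lt_one h0 (by linarith) h1p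
  · -- type 2
    have hV : 0 < vP p ν (Ctau τ) + α * vP p ν ({-τ, τ} : Set ℝ) := by
      rcases eq_or_lt_of_le hτ with h0 | h0
      · have : vP p ν (Ctau τ) = 1 := by rw [← h0]; exact vP_Ctau_zero hp hmom0 hmomfin
        have h2 := vP_nonneg (p := p) (ν := ν) ({-τ, τ} : Set ℝ)
        nlinarith [hα.1]
      · rcases lt_or_ge 0 (ν (Ctau τ)).toReal with hψ | hψ
        · have hρC : rho p ν (Ctau τ) ≠ 0 := by
            refine rho_pos hp (meas_Ctau τ) (fun x hx hx0 => ?_) ?_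
            · rw [mem_Ctau, hx0, abs_zero] at hx; linarith
            · intro hν0; rw [hν0] at hψ; simp at hψ
          have := vP_pos hmom0 hmomfin (meas_Ctau τ) hρC
          have h2 := vP_nonneg (p := p) (ν := ν) ({-τ, τ} : Set ℝ)
          nlinarith [hα.1]
        · have hψ0 : (ν (Ctau τ)).toReal = 0 := le_antisymm hψ ENNReal.toReal_nonneg
          have hαpos : 0 < α := by
            rw [hrr, hψ0, zero_add] at hr
            nlinarith
          have hρj : rho p ν ({-τ, τ} : Set ℝ) ≠ 0 := by
            refine rho_pos hp (meas_pair τ) ?_ ?_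
            · rintro x (rfl | rfl)
              · exact neg_ne_zero.mpr h0.ne'
              · exact h0.ne'
            · intro hν0; rw [hν0] at hj; simp at hj
          have := vP_pos hmom0 hmomfin (meas_pair τ) hρj
          have h2 := vP_nonneg (p := p) (ν := ν) (Ctau τ)
          nlinarith
    have h0 := typeB_base_nonneg hmom0 hmomfin hτ hα.1 hα.2.le
    rw [hd]
    exact Real.rpow_lt_one h0 (by linarith) h1p

lemma rho_Ioo_zero (hp : 0 < p) {τ : ℝ} (hτ : 0 < τ)
    (hle : ν (Ioo (-τ) τ) ≤ ν ({0} : Set ℝ)) : rho p ν (Ioo (-τ) τ) = 0 := by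
  have h0mem : ({0} : Set ℝ) ⊆ Ioo (-τ) τ := by
    intro x hx; rw [Set.mem_singleton_iff] at hx; subst hx
    exact ⟨by linarith, hτ⟩
  have hdiff : ν (Ioo (-τ) τ \ {0}) = 0 := by
    rw [measure_diff h0mem (measurableSet_singleton 0).nullMeasurableSet (measure_ne_top ν _)]
    exact tsub_eq_zero_of_le hle
  refine le_antisymm ?_ zero_le
  calc rho p ν (Ioo (-τ) τ) ≤ rho p ν (({0} : Set ℝ) ∪ (Ioo (-τ) τ \ {0})) :=
        measure_mono (fun x hx => by
          by_cases hx0 : x = 0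
          · exact Or.inl hx0
          · exact Or.inr ⟨hx, hx0⟩)
    _ ≤ rho p ν ({0} : Set ℝ) + rho p ν (Ioo (-τ) τ \ {0}) := measure_union_le _ _
    _ = 0 := by rw [rho_singleton_zero hp, rho_zero_of_null hdiff, add_zero]

lemma nu_Ioo_toReal {τ r : ℝ} (hrr : r = phiTail ν τ) :
    (ν (Ioo (-τ) τ)).toReal = 1 - r := by
  have h2 := compl_toReal (ν := ν) (meas_Btau τ)
  rw [compl_Btau] at h2
  rw [h2, hrr]
  rfl

lemma vP_pair_zero' (hp : 0 < p) : vP p ν ({-0, 0} : Set ℝ) = 0 := by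
  rw [pair_zero, vP_eq (measurableSet_singleton 0), rho_singleton_zero hp,
    ENNReal.toReal_zero, zero_div]

lemma graph_d_zero (hp : 0 < p) (hmom0 : 0 < momentP p ν) (hmomfin : momentP p ν < ∞)
    {r d : ℝ} (h : (r, d) ∈ Fgraph p ν) (hr : 1 - (ν ({0} : Set ℝ)).toReal ≤ r) : d = 0 := by
  have h1p : 1 / p ≠ 0 := by positivity
  rcases h with ⟨τ, hτ, heq⟩ | ⟨τ, hτ, hj, α, hα, heq⟩ <;>
    simp only [Prod.mk.injEq] at heq <;> obtain ⟨hrr, hd⟩ := heq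
  · -- type 1
    have hvone : vP p ν (Btau τ) = 1 := by
      rcases eq_or_lt_of_le hτ with h0 | h0
      · rw [← h0, Btau_zero, vP_eq MeasurableSet.univ, rho_univ,
          div_self (moment_toReal_pos hmom0 hmomfin).ne']
      · refine vP_eq_one_of_compl_null hmom0 hmomfin (meas_Btau τ) ?_
        rw [compl_Btau]
        refine rho_Ioo_zero hp h0 (measure_le_of_toReal_le ν ?_)
        rw [nu_Ioo_toReal hrr]
        linarith
    rw [hd, hvone, sub_self, Real.zero_rpow h1p]
  · -- type 2
    rcases eq_or_lt_of_le hτ with h0 | h0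
    · rw [← h0] at hd
      rw [hd, vP_pair_zero' hp, vP_Ctau_zero hp hmom0 hmomfin, mul_zero]
      norm_num
      rw [show (1:ℝ)/p = p⁻¹ from one_div p] at h1p
      exact Real.zero_rpow h1p
    · exfalso
      have hdisj : Disjoint ({-τ, τ} : Set ℝ) ({0} : Set ℝ) := by
        rw [Set.disjoint_right]
        rintro x rfl (h1 | h1)
        · exact absurd h1.symm (neg_ne_zero.mpr h0.ne')
        · exact absurd h1.symm h0.ne'
      have hsub : ({-τ, τ} : Set ℝ) ∪ ({0} : Set ℝ) ⊆ Icc (-τ) τ := by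
        rintro x ((rfl | rfl) | rfl)
        · exact ⟨le_refl _, by linarith⟩
        · exact ⟨by linarith, le_refl _⟩
        · exact ⟨by linarith, h0.le⟩
      have hmeasu : ν (({-τ, τ} : Set ℝ) ∪ ({0} : Set ℝ)) =
          ν ({-τ, τ} : Set ℝ) + ν ({0} : Set ℝ) :=
        measure_union hdisj (measurableSet_singleton 0)
      have hle : (ν ({-τ, τ} : Set ℝ)).toReal + (ν ({0} : Set ℝ)).toReal ≤
          (ν (Icc (-τ) τ)).toReal := by
        have := toReal_measure_mono ν hsub
        rwa [hmeasu, ENNReal.toReal_add (measure_ne_top ν _) (measure_ne_top ν _)] at this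
      have hIcc : (ν (Icc (-τ) τ)).toReal = 1 - (ν (Ctau τ)).toReal := by
        have h2 := compl_toReal (ν := ν) (meas_Ctau τ)
        rwa [compl_Ctau] at h2
      nlinarith [hα.2, hj, hrr, hr, hle, hIcc, mul_pos (sub_pos.mpr hα.2) hj]

lemma graph_d_pos (hp : 0 < p) (hmom0 : 0 < momentP p ν) (hmomfin : momentP p ν < ∞)
    {r d : ℝ} (h : (r, d) ∈ Fgraph p ν) (hr2 : r < 1 - (ν ({0} : Set ℝ)).toReal) : 0 < d := by
  haveI := rho_finite (p := p) (ν := ν) hmomfin.ne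
  have hm := moment_toReal_pos (p := p) (ν := ν) hmom0 hmomfin
  have hz : 0 ≤ (ν ({0} : Set ℝ)).toReal := ENNReal.toReal_nonneg
  rcases h with ⟨τ, hτ, heq⟩ | ⟨τ, hτ, hj, α, hα, heq⟩ <;>
    simp only [Prod.mk.injEq] at heq <;> obtain ⟨hrr, hd⟩ := heq
  · -- type 1
    rcases eq_or_lt_of_le hτ with h0 | h0
    · exfalso
      have hr1 : r = 1 := by
        rw [hrr, ← h0]
        unfold phiTail
        rw [Btau_zero, measure_univ, ENNReal.toReal_one]
      linarith
    · have hdiffR : 0 < (ν (Ioo (-τ) τ \ {0})).toReal := by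
        rw [toReal_measure_diff ν (fun x hx => by
            rw [Set.mem_singleton_iff] at hx; subst hx; exact ⟨by linarith, h0⟩)
          (measurableSet_singleton 0), nu_Ioo_toReal hrr]
        linarith
      have hρdiff : rho p ν (Ioo (-τ) τ \ {0}) ≠ 0 := by
        refine rho_pos hp ((measurableSet_Ioo).diff (measurableSet_singleton 0))
          (fun x hx => hx.2) ?_
        intro h0'
        rw [h0'] at hdiffR
        simp at hdiffR
      have hρdiffR : 0 < (rho p ν (Ioo (-τ) τ \ {0})).toReal :=
        ENNReal.toReal_pos hρdiff (measure_ne_top _ _)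
      have hcompl := rho_compl_toReal (p := p) (ν := ν) hmomfin (meas_Btau τ)
      have hmono : (rho p ν (Ioo (-τ) τ \ {0})).toReal ≤ (rho p ν (Btau τ)ᶜ).toReal := by
        refine toReal_measure_mono (rho p ν) ?_
        rw [compl_Btau]
        exact Set.diff_subset
      have hvB : vP p ν (Btau τ) < 1 := by
        rw [vP_eq (meas_Btau τ), div_lt_one hm]
        linarith
      rw [hd]
      exact Real.rpow_pos_of_pos (by linarith) _
  · -- type 2
    rcases eq_or_lt_of_le hτ with h0 | h0
    · exfalso
      rw [← h0] at hrr
      have hC0 : (ν (Ctau 0)).toReal = 1 - (ν ({0} : Set ℝ)).toReal := by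
        have h2 := compl_toReal (ν := ν) (measurableSet_singleton (0:ℝ))
        rw [← Ctau_zero] at h2
        exact h2
      have hαj : 0 ≤ α * (ν ({-0, 0} : Set ℝ)).toReal := by
        have := ENNReal.toReal_nonneg (a := ν ({-0, 0} : Set ℝ))
        nlinarith [hα.1]
      nlinarith [hrr, hr2]
    · -- τ > 0
      have hIccρ : (rho p ν (Icc (-τ) τ)).toReal =
          (momentP p ν).toReal - (rho p ν (Ctau τ)).toReal := by
        have h2 := rho_compl_toReal (p := p) (ν := ν) hmomfin (meas_Ctau τ)
        rwa [compl_Ctau] at h2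
      have hIccρ2 := measure_Icc_split_toReal (rho p ν) h0
      have hIccν : (ν (Icc (-τ) τ)).toReal = 1 - (ν (Ctau τ)).toReal := by
        have h2 := compl_toReal (ν := ν) (meas_Ctau τ)
        rwa [compl_Ctau] at h2
      have hIccν2 := measure_Icc_split_toReal ν h0
      have h0mem : ({0} : Set ℝ) ⊆ Ioo (-τ) τ := fun x hx => by
        rw [Set.mem_singleton_iff] at hx; subst hx; exact ⟨by linarith, h0⟩
      have hdiffν := toReal_measure_diff ν h0mem (measurableSet_singleton 0)
      have hkey : 0 < (ν (Ioo (-τ) τ \ {0})).toReal +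
          (1 - α) * (ν ({-τ, τ} : Set ℝ)).toReal := by
        nlinarith [hrr, hr2]
      have hsuff : 0 < (momentP p ν).toReal - (rho p ν (Ctau τ)).toReal -
          α * (rho p ν ({-τ, τ} : Set ℝ)).toReal := by
        have hρIoo_nonneg : 0 ≤ (rho p ν (Ioo (-τ) τ)).toReal := ENNReal.toReal_nonneg
        have hρpair_nonneg : 0 ≤ (rho p ν ({-τ, τ} : Set ℝ)).toReal := ENNReal.toReal_nonneg
        rcases lt_or_ge 0 (ν (Ioo (-τ) τ \ {0})).toReal with hcase | hcase
        · have hρdiff : rho p ν (Ioo (-τ) τ \ {0}) ≠ 0 := by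
            refine rho_pos hp ((measurableSet_Ioo).diff (measurableSet_singleton 0))
              (fun x hx => hx.2) ?_
            intro h0'
            rw [h0'] at hcase
            simp at hcase
          have h1 : 0 < (rho p ν (Ioo (-τ) τ \ {0})).toReal :=
            ENNReal.toReal_pos hρdiff (measure_ne_top _ _)
          have h2 : (rho p ν (Ioo (-τ) τ \ {0})).toReal ≤ (rho p ν (Ioo (-τ) τ)).toReal :=
            toReal_measure_mono (rho p ν) Set.diff_subset
          nlinarith [hIccρ, hIccρ2, h1, h2, mul_nonneg (sub_nonneg.mpr hα.2.le) hρpair_nonneg]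
        · have hcase0 : (ν (Ioo (-τ) τ \ {0})).toReal = 0 :=
            le_antisymm hcase ENNReal.toReal_nonneg
          have hαlt : 1 - α > 0 := by linarith [hα.2]
          have hjν : ν ({-τ, τ} : Set ℝ) ≠ 0 := by
            intro h0'
            rw [h0'] at hj
            simp at hj
          have hρpair : rho p ν ({-τ, τ} : Set ℝ) ≠ 0 := by
            refine rho_pos hp (meas_pair τ) ?_ hjν
            rintro x (rfl | rfl)
            · exact neg_ne_zero.mpr h0.ne'
            · exact h0.ne'
          have h1 : 0 < (rho p ν ({-τ, τ} : Set ℝ)).toReal :=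
            ENNReal.toReal_pos hρpair (measure_ne_top _ _)
          nlinarith [hIccρ, hIccρ2, mul_pos hαlt h1, hρIoo_nonneg]
      have hbase : 0 < 1 - vP p ν (Ctau τ) - α * vP p ν ({-τ, τ} : Set ℝ) := by
        rw [vP_eq (meas_Ctau τ), vP_eq (meas_pair τ)]
        have hid : 1 - (rho p ν (Ctau τ)).toReal / (momentP p ν).toReal -
            α * ((rho p ν ({-τ, τ} : Set ℝ)).toReal / (momentP p ν).toReal) =
            ((momentP p ν).toReal - (rho p ν (Ctau τ)).toReal -
              α * (rho p ν ({-τ, τ} : Set ℝ)).toReal) / (momentP p ν).toReal := by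
          field_simp
        rw [hid]
        exact div_pos hsuff hm
      rw [hd]
      exact Real.rpow_pos_of_pos hbase _

end Main2
section Main3

variable [IsProbabilityMeasure ν]

lemma point_nu (hmom0 : 0 < momentP p ν) (hmomfin : momentP p ν < ∞) {r : ℝ}
    (hr : r ∈ Ioc (0:ℝ) 1) : ∃ d : ℝ, (r, d) ∈ Fgraph p ν := by
  have hc0 : (ENNReal.ofReal r) ≠ 0 := by
    simp only [Ne, ENNReal.ofReal_eq_zero, not_le]
    exact hr.1
  have hc : ENNReal.ofReal r ≤ ν univ := by
    rw [measure_univ]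
    exact ENNReal.ofReal_le_one.mpr hr.2
  obtain ⟨τ, hτ0, hC, hB⟩ := exists_tau ν hc0 hc
  have hψr : (ν (Ctau τ)).toReal ≤ r := by
    have := ENNReal.toReal_mono ENNReal.ofReal_ne_top hC
    rwa [ENNReal.toReal_ofReal hr.1.le] at this
  have hrφ : r ≤ (ν (Btau τ)).toReal := by
    have := ENNReal.toReal_mono (measure_ne_top ν _) hB
    rwa [ENNReal.toReal_ofReal hr.1.le] at this
  by_cases hBr : (ν (Btau τ)).toReal = r
  · exact ⟨(1 - vP p ν (Btau τ)) ^ (1/p), Or.inl ⟨τ, hτ0, by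
      rw [Prod.mk.injEq]; exact ⟨hBr.symm, rfl⟩⟩⟩
  · have hlt : r < (ν (Btau τ)).toReal := lt_of_le_of_ne hrφ (fun h => hBr h.symm)
    have hsplit := measure_Btau_split_toReal ν hτ0
    have hjpos : 0 < (ν ({-τ, τ} : Set ℝ)).toReal := by nlinarith
    set α := (r - (ν (Ctau τ)).toReal) / (ν ({-τ, τ} : Set ℝ)).toReal with hα
    have hα0 : 0 ≤ α := div_nonneg (by linarith) hjpos.le
    have hα1 : α < 1 := by
      rw [hα, div_lt_one hjpos]
      linarith
    refine ⟨(1 - vP p ν (Ctau τ) - α * vP p ν ({-τ, τ} : Set ℝ)) ^ (1/p),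
      Or.inr ⟨τ, hτ0, hjpos, α, ⟨hα0, hα1⟩, ?_⟩⟩
    rw [Prod.mk.injEq]
    refine ⟨?_, rfl⟩
    rw [hα, div_mul_cancel₀ _ hjpos.ne']
    ring

lemma point_rho (hp : 0 < p) (hmom0 : 0 < momentP p ν) (hmomfin : momentP p ν < ∞) {d : ℝ}
    (hd : d ∈ Ico (0:ℝ) 1) : ∃ r ∈ Ioc (0:ℝ) 1, (r, d) ∈ Fgraph p ν := by
  haveI := rho_finite (p := p) (ν := ν) hmomfin.ne
  have hm := moment_toReal_pos (p := p) (ν := ν) hmom0 hmomfin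
  set m := (momentP p ν).toReal with hmdef
  set v := 1 - d ^ p with hvdef
  have hv0 : 0 < v := by
    have : d ^ p < 1 := Real.rpow_lt_one hd.1 hd.2 hp
    simp only [hvdef]; linarith
  have hv1 : v ≤ 1 := by
    have : 0 ≤ d ^ p := Real.rpow_nonneg hd.1 p
    simp only [hvdef]; linarith
  have hdeq : (1 - v) ^ (1/p) = d := by
    rw [hvdef, show (1:ℝ) - (1 - d ^ p) = d ^ p by ring, one_div,
      Real.rpow_rpow_inv hd.1 hp.ne']
  have hc0 : ENNReal.ofReal (v * m) ≠ 0 := by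
    simp only [Ne, ENNReal.ofReal_eq_zero, not_le]
    positivity
  have hc : ENNReal.ofReal (v * m) ≤ rho p ν univ := by
    rw [rho_univ, ← ENNReal.ofReal_toReal hmomfin.ne]
    apply ENNReal.ofReal_le_ofReal
    nlinarith
  obtain ⟨τ, hτ0, hC, hB⟩ := exists_tau (rho p ν) hc0 hc
  have hψr : (rho p ν (Ctau τ)).toReal ≤ v * m := by
    have := ENNReal.toReal_mono ENNReal.ofReal_ne_top hC
    rwa [ENNReal.toReal_ofReal (by positivity)] at this
  have hrφ : v * m ≤ (rho p ν (Btau τ)).toReal := by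
    have := ENNReal.toReal_mono (measure_ne_top _ _) hB
    rwa [ENNReal.toReal_ofReal (by positivity)] at this
  by_cases hBr : (rho p ν (Btau τ)).toReal = v * m
  · -- type 1 point
    have hvB : vP p ν (Btau τ) = v := by
      rw [vP_eq (meas_Btau τ), hBr, ← hmdef, mul_div_cancel_right₀ _ hm.ne']
    refine ⟨phiTail ν τ, ⟨?_, ?_⟩, Or.inl ⟨τ, hτ0, ?_⟩⟩
    · -- 0 < phiTail
      have hνB : ν (Btau τ) ≠ 0 := by
        intro h0
        have hz : rho p ν (Btau τ) = 0 := rho_zero_of_null h0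
        rw [hz, le_zero_iff] at hB
        exact hc0 hB
      exact ENNReal.toReal_pos hνB (measure_ne_top ν _)
    · -- ≤ 1
      unfold phiTail
      have := toReal_measure_mono ν (subset_univ (Btau τ))
      rwa [measure_univ, ENNReal.toReal_one] at this
    · rw [Prod.mk.injEq, hvB, hdeq]
      exact ⟨rfl, rfl⟩
  · -- type 2 point
    have hlt : v * m < (rho p ν (Btau τ)).toReal := lt_of_le_of_ne hrφ (fun h => hBr h.symm)
    have hsplitρ := measure_Btau_split_toReal (rho p ν) hτ0
    have hρj : 0 < (rho p ν ({-τ, τ} : Set ℝ)).toReal := by nlinarith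
    have hτpos : 0 < τ := by
      rcases eq_or_lt_of_le hτ0 with h0 | h0
      · exfalso
        rw [← h0, pair_zero, rho_singleton_zero hp] at hρj
        simp at hρj
      · exact h0
    have hνj : ν ({-τ, τ} : Set ℝ) ≠ 0 := by
      intro h0
      rw [rho_zero_of_null h0] at hρj
      simp at hρj
    have hjν : 0 < (ν ({-τ, τ} : Set ℝ)).toReal := ENNReal.toReal_pos hνj (measure_ne_top ν _)
    set α := (v * m - (rho p ν (Ctau τ)).toReal) / (rho p ν ({-τ, τ} : Set ℝ)).toReal with hα
    have hα0 : 0 ≤ α := div_nonneg (by linarith) hρj.le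
    have hα1 : α < 1 := by
      rw [hα, div_lt_one hρj]
      linarith
    have h1 : α * (rho p ν ({-τ, τ} : Set ℝ)).toReal
        = v * m - (rho p ν (Ctau τ)).toReal := by
      rw [hα, div_mul_cancel₀ _ hρj.ne']
    have hvsum : vP p ν (Ctau τ) + α * vP p ν ({-τ, τ} : Set ℝ) = v := by
      rw [vP_eq (meas_Ctau τ), vP_eq (meas_pair τ), ← hmdef,
        show (rho p ν (Ctau τ)).toReal / m
            + α * ((rho p ν ({-τ, τ} : Set ℝ)).toReal / m)
          = ((rho p ν (Ctau τ)).toReal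
            + α * (rho p ν ({-τ, τ} : Set ℝ)).toReal) / m by ring, h1,
        show (rho p ν (Ctau τ)).toReal + (v * m - (rho p ν (Ctau τ)).toReal)
          = v * m by ring, mul_div_cancel_right₀ _ hm.ne']
    refine ⟨(ν (Ctau τ)).toReal + α * (ν ({-τ, τ} : Set ℝ)).toReal, ⟨?_, ?_⟩,
      Or.inr ⟨τ, hτ0, hjν, α, ⟨hα0, hα1⟩, ?_⟩⟩
    · -- positivity of r
      rcases lt_or_ge 0 (ν (Ctau τ)).toReal with hψ | hψ
      · have : 0 ≤ α * (ν ({-τ, τ} : Set ℝ)).toReal := by positivity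
        linarith
      · have hψ0 : (ν (Ctau τ)).toReal = 0 := le_antisymm hψ ENNReal.toReal_nonneg
        have hνC : ν (Ctau τ) = 0 := by
          rcases (ENNReal.toReal_eq_zero_iff _).mp hψ0 with h | h
          · exact h
          · exact absurd h (measure_ne_top ν _)
        have hρC : (rho p ν (Ctau τ)).toReal = 0 := by
          rw [rho_zero_of_null hνC]
          simp
        have hαpos : 0 < α := by
          rw [hα, hρC, sub_zero]
          positivity
        have : 0 < α * (ν ({-τ, τ} : Set ℝ)).toReal := mul_pos hαpos hjν
        linarith
    · -- ≤ 1
      have hsplitν := measure_Btau_split_toReal ν hτ0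
      have hφ1 : (ν (Btau τ)).toReal ≤ 1 := by
        have := toReal_measure_mono ν (subset_univ (Btau τ))
        rwa [measure_univ, ENNReal.toReal_one] at this
      nlinarith
    · rw [Prod.mk.injEq]
      refine ⟨rfl, ?_⟩
      rw [show 1 - vP p ν (Ctau τ) - α * vP p ν ({-τ, τ} : Set ℝ)
          = 1 - (vP p ν (Ctau τ) + α * vP p ν ({-τ, τ} : Set ℝ)) by ring, hvsum, hdeq]

end Main3

end FApproxAux

open FApproxAux in
/-- Lemma 8 (iii)-(v): boundary behaviour and range of the approximation error function. -/
theorem fApprox_boundary_range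
    (p : ℝ) (hp : 0 < p) (ν : Measure ℝ) [IsProbabilityMeasure ν]
    (hmom0 : 0 < momentP p ν) (hmomfin : momentP p ν < ∞) :
    (∀ r ∈ Set.Icc (1 - (ν ({0} : Set ℝ)).toReal) 1, fApprox p ν r = 0) ∧
    Tendsto (fApprox p ν) (nhdsWithin 0 (Set.Ioi 0)) (𝓝 1) ∧
    fApprox p ν '' Set.Ioc (0:ℝ) 1 = Set.Ico (0:ℝ) 1 ∧
    {r ∈ Set.Ioc (0:ℝ) 1 | fApprox p ν r ∈ Set.Ioo (0:ℝ) 1} =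
      Set.Ioo (0:ℝ) (1 - (ν ({0} : Set ℝ)).toReal) := by
  haveI := rho_finite (p := p) (ν := ν) hmomfin.ne
  have hm := moment_toReal_pos (p := p) (ν := ν) hmom0 hmomfin
  set m := (momentP p ν).toReal with hmdef
  set z := (ν ({0} : Set ℝ)).toReal with hzdef
  have hz0 : 0 ≤ z := ENNReal.toReal_nonneg
  have hz1 : z < 1 := by
    by_contra hcon
    push_neg at hcon
    have hz1' : z ≤ 1 := by
      have := toReal_measure_mono ν (subset_univ ({0} : Set ℝ))
      rwa [measure_univ, ENNReal.toReal_one] at this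
    have hzeq : z = 1 := le_antisymm hz1' hcon
    have hcompl : (ν (({0} : Set ℝ)ᶜ)).toReal = 0 := by
      rw [compl_toReal (measurableSet_singleton 0), ← hzdef, hzeq, sub_self]
    have hνc : ν (({0} : Set ℝ)ᶜ) = 0 := by
      rcases (ENNReal.toReal_eq_zero_iff _).mp hcompl with h | h
      · exact h
      · exact absurd h (measure_ne_top ν _)
    have : momentP p ν = 0 := by
      have h1 : rho p ν univ = 0 := by
        refine le_antisymm ?_ zero_le
        calc rho p ν univ = rho p ν (({0} : Set ℝ) ∪ ({0} : Set ℝ)ᶜ) := by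
              rw [Set.union_compl_self]
          _ ≤ rho p ν ({0} : Set ℝ) + rho p ν (({0} : Set ℝ)ᶜ) := measure_union_le _ _
          _ = 0 := by rw [rho_singleton_zero hp, rho_zero_of_null hνc, add_zero]
      rwa [rho_univ] at h1
    exact absurd this hmom0.ne'
  have claimA : ∀ r ∈ Set.Icc (1 - z) 1, fApprox p ν r = 0 := by
    intro r hr
    rw [fApprox, if_neg hmomfin.ne]
    rcases Set.eq_empty_or_nonempty {x : ℝ | (r, x) ∈ Fgraph p ν} with he | ⟨d, hd⟩
    · rw [he, Real.sSup_empty]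
    · have hd0 : d = 0 := graph_d_zero hp hmom0 hmomfin hd hr.1
      have hset : {x : ℝ | (r, x) ∈ Fgraph p ν} = {0} := by
        refine Set.eq_singleton_iff_unique_mem.mpr ⟨hd0 ▸ hd, fun x hx => ?_⟩
        exact graph_d_zero hp hmom0 hmomfin hx hr.1
      rw [hset, csSup_singleton]
  refine ⟨claimA, ?_, ?_, ?_⟩
  · -- the limit at 0⁺
    rw [Metric.tendsto_nhdsWithin_nhds]
    intro ε hε
    have hcont : ContinuousAt (fun t : ℝ => (1 - t) ^ (1/p)) 0 := by
      have h1 : ContinuousAt (fun t : ℝ => (1:ℝ) - t) 0 :=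
        (continuous_const.sub continuous_id).continuousAt
      have h2 : ContinuousAt (fun s : ℝ => s ^ (1/p)) ((fun t : ℝ => (1:ℝ) - t) 0) := by
        have := Real.continuousAt_rpow_const 1 (1/p) (Or.inl one_ne_zero)
        simpa using this
      exact h2.comp h1
    obtain ⟨η, hη, hηprop⟩ := Metric.continuousAt_iff.mp hcont ε hε
    have hηm : (ENNReal.ofReal (η * m / 2)) ≠ 0 := by
      simp only [Ne, ENNReal.ofReal_eq_zero, not_le]
      positivity
    obtain ⟨δ₀, hδ₀, hδprop⟩ := exists_pos_setLIntegral_lt_of_measure_lt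
      (μ := ν) (f := gfun p) (by rw [← momentP_eq_lintegral_gfun]; exact hmomfin.ne) hηm
    set δ1 := min δ₀ 1 with hδ1def
    have hδ1pos : 0 < δ1 := lt_min hδ₀ one_pos
    have hδ1top : δ1 ≠ ∞ := ((min_le_right _ _).trans_lt ENNReal.one_lt_top).ne
    set δR := δ1.toReal with hδRdef
    have hδR : 0 < δR := ENNReal.toReal_pos hδ1pos.ne' hδ1top
    have hδprop' : ∀ s : Set ℝ, MeasurableSet s → ν s < δ1 →
        (rho p ν s).toReal < η * m / 2 := by
      intro s hs hlt
      have h1 : rho p ν s < ENNReal.ofReal (η * m / 2) := by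
        rw [rho, withDensity_apply _ hs]
        exact hδprop s (hlt.trans_le (min_le_left _ _))
      exact ENNReal.toReal_lt_of_lt_ofReal h1
    set δ := min δR (min (η * δR / 2) (1 - z)) with hδdef
    have hδpos : 0 < δ := by
      apply lt_min hδR
      apply lt_min
      · positivity
      · linarith
    refine ⟨δ, hδpos, ?_⟩
    intro r hrIoi hdist
    have hr0 : 0 < r := hrIoi
    have hrδ : r < δ := by
      rw [Real.dist_eq, sub_zero, abs_of_pos hr0] at hdist
      exact hdist
    have hrδR : r < δR := hrδ.trans_le (min_le_left _ _)
    have hrηδ : r < η * δR / 2 := hrδ.trans_le ((min_le_right _ _).trans (min_le_left _ _))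
    have hrz : r < 1 - z := hrδ.trans_le ((min_le_right _ _).trans (min_le_right _ _))
    have hr1 : r ≤ 1 := by linarith
    obtain ⟨d, hdmem⟩ := point_nu hmom0 hmomfin ⟨hr0, hr1⟩
    rw [fApprox_eq_of_mem hp hmom0 hmomfin hdmem]
    suffices h : ∃ V : ℝ, 0 ≤ V ∧ V < η ∧ d = (1 - V) ^ (1/p) by
      obtain ⟨V, hV0, hVη, rfl⟩ := h
      have hdist' : dist V 0 < η := by
        rw [Real.dist_eq, sub_zero, abs_of_nonneg hV0]
        exact hVη
      have := hηprop hdist'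
      simpa using this
    rcases hdmem with ⟨τ, hτ, heq⟩ | ⟨τ, hτ, hj, α, hα, heq⟩ <;>
      simp only [Prod.mk.injEq] at heq <;> obtain ⟨hrr, hdd⟩ := heq
    · -- type 1
      refine ⟨vP p ν (Btau τ), vP_nonneg _, ?_, hdd⟩
      have hmlt : ν (Btau τ) < δ1 := by
        refine (ENNReal.toReal_lt_toReal (measure_ne_top ν _) hδ1top).mp ?_
        rw [← hδRdef]
        calc (ν (Btau τ)).toReal = r := hrr.symm
          _ < δR := hrδR
      have hρlt := hδprop' _ (meas_Btau τ) hmlt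
      rw [vP_eq (meas_Btau τ), ← hmdef, div_lt_iff₀ hm]
      nlinarith [mul_pos hη hm]
    · -- type 2
      rcases eq_or_lt_of_le hτ with h0 | h0
      · exfalso
        rw [← h0] at hrr
        have hC0 : (ν (Ctau 0)).toReal = 1 - z := by
          have h2 := compl_toReal (ν := ν) (measurableSet_singleton (0:ℝ))
          rw [← Ctau_zero] at h2
          exact h2
        have hαj : 0 ≤ α * (ν ({-0, 0} : Set ℝ)).toReal := by
          have := ENNReal.toReal_nonneg (a := ν ({-0, 0} : Set ℝ))
          nlinarith [hα.1]
        linarith [hrr, hrz, hC0, hαj]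
      · refine ⟨vP p ν (Ctau τ) + α * vP p ν ({-τ, τ} : Set ℝ), ?_, ?_, ?_⟩
        · have h1 := vP_nonneg (p := p) (ν := ν) (Ctau τ)
          have h2 := vP_nonneg (p := p) (ν := ν) ({-τ, τ} : Set ℝ)
          nlinarith [hα.1]
        · -- the main estimate
          have hψR : (ν (Ctau τ)).toReal ≤ r := by
            have h2 : 0 ≤ α * (ν ({-τ, τ} : Set ℝ)).toReal := by
              have := ENNReal.toReal_nonneg (a := ν ({-τ, τ} : Set ℝ))
              nlinarith [hα.1]
            linarith [hrr]
          have hνC_lt : ν (Ctau τ) < δ1 := by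
            refine (ENNReal.toReal_lt_toReal (measure_ne_top ν _) hδ1top).mp ?_
            rw [← hδRdef]
            linarith
          have hρC := hδprop' _ (meas_Ctau τ) hνC_lt
          have hαjr : α * (ν ({-τ, τ} : Set ℝ)).toReal ≤ r := by
            have : 0 ≤ (ν (Ctau τ)).toReal := ENNReal.toReal_nonneg
            linarith [hrr]
          have hρpairR : (rho p ν ({-τ, τ} : Set ℝ)).toReal
              = τ ^ p * (ν ({-τ, τ} : Set ℝ)).toReal := by
            rw [rho_pair h0, ENNReal.toReal_mul,
              ENNReal.toReal_ofReal (Real.rpow_nonneg h0.le p)]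
          have hαterm : α * (rho p ν ({-τ, τ} : Set ℝ)).toReal ≤ η * m / 2 := by
            rcases lt_or_ge (ν ({-τ, τ} : Set ℝ)) δ1 with hcase | hcase
            · have hρp := hδprop' _ (meas_pair τ) hcase
              have hρnn : 0 ≤ (rho p ν ({-τ, τ} : Set ℝ)).toReal := ENNReal.toReal_nonneg
              exact (mul_le_of_le_one_left hρnn hα.2.le).trans hρp.le
            · have hjR : δR ≤ (ν ({-τ, τ} : Set ℝ)).toReal := by
                rw [hδRdef]
                exact ENNReal.toReal_mono (measure_ne_top ν _) hcase
              have hρm : (rho p ν ({-τ, τ} : Set ℝ)).toReal ≤ m := by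
                rw [hmdef]
                exact ENNReal.toReal_mono hmomfin.ne (rho_le_moment _)
              have hτp : 0 ≤ τ ^ p := Real.rpow_nonneg h0.le p
              have hτpK : τ ^ p * δR ≤ m := by
                have h4 := mul_le_mul_of_nonneg_left hjR hτp
                rw [← hρpairR] at h4
                linarith
              calc α * (rho p ν ({-τ, τ} : Set ℝ)).toReal
                  = τ ^ p * (α * (ν ({-τ, τ} : Set ℝ)).toReal) := by rw [hρpairR]; ring
                _ ≤ τ ^ p * r := mul_le_mul_of_nonneg_left hαjr hτp
                _ ≤ τ ^ p * (η * δR / 2) := mul_le_mul_of_nonneg_left hrηδ.le hτp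
                _ = (τ ^ p * δR) * (η / 2) := by ring
                _ ≤ m * (η / 2) := mul_le_mul_of_nonneg_right hτpK (by positivity)
                _ = η * m / 2 := by ring
          rw [vP_eq (meas_Ctau τ), vP_eq (meas_pair τ), ← hmdef,
            show (rho p ν (Ctau τ)).toReal / m
                + α * ((rho p ν ({-τ, τ} : Set ℝ)).toReal / m)
              = ((rho p ν (Ctau τ)).toReal
                + α * (rho p ν ({-τ, τ} : Set ℝ)).toReal) / m by ring,
            div_lt_iff₀ hm]
          linarith
        · rw [hdd, sub_sub]
  · -- the image
    ext d
    simp only [Set.mem_image, Set.mem_Ico]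
    constructor
    · rintro ⟨r, hr, rfl⟩
      obtain ⟨d', hd'⟩ := point_nu hmom0 hmomfin hr
      rw [fApprox_eq_of_mem hp hmom0 hmomfin hd']
      exact ⟨(graph_d_mem hp hmom0 hmomfin hd').1,
        graph_d_lt_one hp hmom0 hmomfin hd' hr.1⟩
    · intro hd
      obtain ⟨r, hr, hmem⟩ := point_rho hp hmom0 hmomfin hd
      exact ⟨r, hr, fApprox_eq_of_mem hp hmom0 hmomfin hmem⟩
  · -- the preimage
    ext r
    simp only [Set.mem_setOf_eq, Set.mem_Ioc, Set.mem_Ioo]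
    constructor
    · rintro ⟨⟨hr0, hr1⟩, hf0, hf1⟩
      refine ⟨hr0, ?_⟩
      by_contra hge
      push_neg at hge
      rw [claimA r ⟨hge, hr1⟩] at hf0
      exact lt_irrefl 0 hf0
    · rintro ⟨hr0, hrlt⟩
      have hr1 : r ≤ 1 := by linarith
      refine ⟨⟨hr0, hr1⟩, ?_⟩
      obtain ⟨d', hd'⟩ := point_nu hmom0 hmomfin ⟨hr0, hr1⟩
      rw [fApprox_eq_of_mem hp hmom0 hmomfin hd']
      exact ⟨graph_d_pos hp hmom0 hmomfin hd' hrlt,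
        graph_d_lt_one hp hmom0 hmomfin hd' hr0⟩

end
end

section
/- Let p > 0, let ν be a probability measure on ℝ with 0 < ∫_ℝ |x|^p dν(x) < ∞, and define the set of pairs F_ν = {(φ_ν(τ), (1 − v_p(B_τ))^{1/p}) : τ ≥ 0} ∪ {(ν(C_τ) + α·ν({−τ,τ}), (1 − v_p(C_τ) − α·v_p({−τ,τ}))^{1/p}) : τ ≥ 0 with ν({−τ,τ}) > 0, α ∈ [0,1)}. Then F_ν is the graph of a function from (0,1] to [0,1): for every r ∈ (0,1] there exists exactly one d ∈ [0,1) such that (r,d) ∈ F_ν. -/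
open MeasureTheory Filter Set
open scoped ENNReal Topology Classical

noncomputable section

section PropTwoAux

variable {p : ℝ} {ν : Measure ℝ}

lemma Btau_eq (τ : ℝ) : Btau τ = {x : ℝ | τ ≤ |x|} := by
  ext x
  simp only [Btau, Set.mem_union, Set.mem_Iic, Set.mem_Ici, Set.mem_setOf_eq, le_abs]
  constructor
  · rintro (h | h)
    · right; linarith
    · left; exact h
  · rintro (h | h)
    · right; exact h
    · left; linarith

lemma Ctau_eq (τ : ℝ) : Ctau τ = {x : ℝ | τ < |x|} := by
  ext x
  simp only [Ctau, Set.mem_union, Set.mem_Iio, Set.mem_Ioi, Set.mem_setOf_eq, lt_abs]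
  constructor
  · rintro (h | h)
    · right; linarith
    · left; exact h
  · rintro (h | h)
    · right; exact h
    · left; linarith

lemma measurableSet_Btau (τ : ℝ) : MeasurableSet (Btau τ) :=
  measurableSet_Iic.union measurableSet_Ici

lemma measurableSet_Ctau (τ : ℝ) : MeasurableSet (Ctau τ) :=
  measurableSet_Iio.union measurableSet_Ioi

lemma measurableSet_pairTau (τ : ℝ) : MeasurableSet ({-τ, τ} : Set ℝ) :=
  (measurableSet_singleton τ).insert (-τ)

lemma Btau_subset {τ τ' : ℝ} (h : τ ≤ τ') : Btau τ' ⊆ Btau τ := by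
  rw [Btau_eq, Btau_eq]
  intro x hx
  simp only [Set.mem_setOf_eq] at hx ⊢
  exact le_trans h hx

lemma Ctau_subset_Btau (τ : ℝ) : Ctau τ ⊆ Btau τ := by
  rw [Btau_eq, Ctau_eq]
  intro x hx
  simp only [Set.mem_setOf_eq] at hx ⊢
  exact le_of_lt hx

lemma Btau_subset_Ctau {τ τ' : ℝ} (h : τ < τ') : Btau τ' ⊆ Ctau τ := by
  rw [Btau_eq, Ctau_eq]
  intro x hx
  simp only [Set.mem_setOf_eq] at hx ⊢
  exact lt_of_lt_of_le h hx

lemma pair_subset_Btau {τ : ℝ} (hτ : 0 ≤ τ) : ({-τ, τ} : Set ℝ) ⊆ Btau τ := by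
  rw [Btau_eq]
  intro x hx
  simp only [Set.mem_insert_iff, Set.mem_singleton_iff] at hx
  simp only [Set.mem_setOf_eq]
  rcases hx with rfl | rfl
  · rw [abs_neg]; exact le_abs_self _
  · exact le_abs_self _

lemma Btau_zero : Btau (0 : ℝ) = Set.univ := by
  rw [Btau_eq]
  ext x
  simp [abs_nonneg]

lemma Btau_union (τ : ℝ) : Btau τ = Ctau τ ∪ ({-τ, τ} : Set ℝ) := by
  ext x
  rw [Btau_eq, Ctau_eq]
  simp only [Set.mem_union, Set.mem_setOf_eq, Set.mem_insert_iff, Set.mem_singleton_iff]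
  rcases abs_cases x with ⟨h1, h2⟩ | ⟨h1, h2⟩ <;> rw [h1] <;> constructor <;> intro h
  · rcases eq_or_lt_of_le h with h | h
    · right; right; linarith
    · left; exact h
  · rcases h with h | h | h <;> linarith
  · rcases eq_or_lt_of_le h with h | h
    · right; left; linarith
    · left; exact h
  · rcases h with h | h | h <;> linarith

lemma disj_pairTau {τ : ℝ} (hτ : 0 ≤ τ) : Disjoint (Ctau τ) ({-τ, τ} : Set ℝ) := by
  rw [Set.disjoint_left]
  intro x hx hx2
  rw [Ctau_eq] at hx
  rcases hx2 with rfl | rfl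
  · rw [Set.mem_setOf_eq, abs_neg, abs_of_nonneg hτ] at hx
    exact lt_irrefl _ hx
  · rw [Set.mem_setOf_eq, abs_of_nonneg hτ] at hx
    exact lt_irrefl _ hx

lemma toReal_measure_Btau [IsProbabilityMeasure ν] {τ : ℝ} (hτ : 0 ≤ τ) :
    (ν (Btau τ)).toReal = (ν (Ctau τ)).toReal + (ν ({-τ, τ} : Set ℝ)).toReal := by
  rw [Btau_union, measure_union (disj_pairTau hτ) (measurableSet_pairTau τ),
    ENNReal.toReal_add (measure_ne_top ν _) (measure_ne_top ν _)]

lemma measure_eq_zero_of_toReal [IsProbabilityMeasure ν] {s : Set ℝ}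
    (h : (ν s).toReal = 0) : ν s = 0 := by
  rcases ENNReal.toReal_eq_zero_iff _ |>.mp h with h | h
  · exact h
  · exact absurd h (measure_ne_top ν s)

/-- restricted moment -/
def mm (p : ℝ) (ν : Measure ℝ) (s : Set ℝ) : ℝ≥0∞ := ∫⁻ x in s, ENNReal.ofReal (|x| ^ p) ∂ν

lemma mm_ne_top (hfin : momentP p ν < ∞) (s : Set ℝ) : mm p ν s ≠ ∞ :=
  ((setLIntegral_le_lintegral s _).trans_lt hfin).ne

lemma vP_eq (s : Set ℝ) : vP p ν s = (mm p ν s).toReal / (momentP p ν).toReal := by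
  rw [vP, ENNReal.toReal_div]; rfl

lemma vP_nonneg (s : Set ℝ) : 0 ≤ vP p ν s := ENNReal.toReal_nonneg

lemma Mr_pos (h0 : 0 < momentP p ν) (hfin : momentP p ν < ∞) :
    0 < (momentP p ν).toReal := ENNReal.toReal_pos h0.ne' hfin.ne

lemma vP_le_one (h0 : 0 < momentP p ν) (hfin : momentP p ν < ∞) (s : Set ℝ) :
    vP p ν s ≤ 1 := by
  rw [vP_eq, div_le_one (Mr_pos h0 hfin)]
  exact ENNReal.toReal_mono hfin.ne (setLIntegral_le_lintegral s _)

lemma vP_null {s : Set ℝ} (hs : ν s = 0) : vP p ν s = 0 := by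
  rw [vP, setLIntegral_measure_zero _ _ hs, ENNReal.zero_div, ENNReal.toReal_zero]

lemma vP_pos (hp : 0 < p) (h0 : 0 < momentP p ν) (hfin : momentP p ν < ∞)
    {τ : ℝ} (hτ : 0 < τ) {s : Set ℝ} (hsub : s ⊆ Btau τ) (hms : MeasurableSet s)
    (hs : ν s ≠ 0) : 0 < vP p ν s := by
  rw [vP_eq]
  apply div_pos _ (Mr_pos h0 hfin)
  refine ENNReal.toReal_pos (fun hmz => ?_) (mm_ne_top hfin s)
  have hlow : ENNReal.ofReal (τ ^ p) * ν s ≤ mm p ν s := by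
    rw [← setLIntegral_const s]
    refine setLIntegral_mono' hms (fun x hx => ENNReal.ofReal_le_ofReal ?_)
    have hx' : τ ≤ |x| := by
      have := hsub hx; rw [Btau_eq] at this; exact this
    exact Real.rpow_le_rpow hτ.le hx' hp.le
  rw [hmz] at hlow
  rcases mul_eq_zero.mp (le_antisymm hlow zero_le) with h | h
  · exact absurd h (ENNReal.ofReal_pos.2 (Real.rpow_pos_of_pos hτ p)).ne'
  · exact hs h

lemma vP_split {τ : ℝ} (hτ : 0 ≤ τ) (hfin : momentP p ν < ∞) :
    vP p ν (Btau τ) = vP p ν (Ctau τ) + vP p ν ({-τ, τ} : Set ℝ) := by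
  rw [vP_eq, vP_eq, vP_eq, ← add_div]
  congr 1
  rw [← ENNReal.toReal_add (mm_ne_top hfin _) (mm_ne_top hfin _)]
  congr 1
  simp only [mm]
  rw [Btau_union, lintegral_union (measurableSet_pairTau τ) (disj_pairTau hτ)]

/-- rate coordinate -/
def Rv (ν : Measure ℝ) (τ α : ℝ) : ℝ :=
  (ν (Ctau τ)).toReal + α * (ν ({-τ, τ} : Set ℝ)).toReal

/-- vP coordinate -/
def Vv (p : ℝ) (ν : Measure ℝ) (τ α : ℝ) : ℝ :=
  vP p ν (Ctau τ) + α * vP p ν ({-τ, τ} : Set ℝ)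

lemma phiTail_eq_Rv [IsProbabilityMeasure ν] {τ : ℝ} (hτ : 0 ≤ τ) :
    phiTail ν τ = Rv ν τ 1 := by
  rw [phiTail, Rv, one_mul, toReal_measure_Btau hτ]

lemma vP_Btau_eq_Vv {τ : ℝ} (hτ : 0 ≤ τ) (hfin : momentP p ν < ∞) :
    vP p ν (Btau τ) = Vv p ν τ 1 := by
  rw [Vv, one_mul, vP_split hτ hfin]

lemma vP_Ctau_zero (hp : 0 < p) (h0 : 0 < momentP p ν) (hfin : momentP p ν < ∞) :
    vP p ν (Ctau 0) = 1 := by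
  have hpair : ({-(0:ℝ), 0} : Set ℝ) = {0} := by norm_num
  have hz : mm p ν ({-(0:ℝ), 0} : Set ℝ) = 0 := by
    rw [hpair]
    refine le_antisymm ?_ zero_le
    calc mm p ν {0} ≤ ∫⁻ _ in ({0} : Set ℝ), 0 ∂ν :=
          setLIntegral_mono' (measurableSet_singleton 0) (fun x hx => by
            rw [Set.mem_singleton_iff] at hx
            simp [hx, Real.zero_rpow hp.ne'])
      _ = 0 := lintegral_zero
  have h1 : mm p ν (Btau 0) = mm p ν (Ctau 0) + mm p ν ({-(0:ℝ), 0} : Set ℝ) := by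
    simp only [mm]
    rw [Btau_union, lintegral_union (measurableSet_pairTau 0) (disj_pairTau (le_refl 0))]
  have h2 : mm p ν (Btau 0) = momentP p ν := by
    simp only [mm, momentP]
    rw [Btau_zero, setLIntegral_univ]
  rw [h1, hz, add_zero] at h2
  rw [vP_eq, h2, div_self (Mr_pos h0 hfin).ne']

lemma Vv_le_one (h0 : 0 < momentP p ν) (hfin : momentP p ν < ∞)
    {τ α : ℝ} (hτ : 0 ≤ τ) (hα : α ∈ Set.Icc (0:ℝ) 1) : Vv p ν τ α ≤ 1 := by
  have h1 : α * vP p ν ({-τ, τ} : Set ℝ) ≤ vP p ν ({-τ, τ} : Set ℝ) :=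
    mul_le_of_le_one_left (vP_nonneg _) hα.2
  have h2 := vP_split (ν := ν) hτ hfin
  have h3 := vP_le_one h0 hfin (Btau τ)
  rw [Vv]
  linarith

lemma Vv_pos (hp : 0 < p) [IsProbabilityMeasure ν] (h0 : 0 < momentP p ν)
    (hfin : momentP p ν < ∞) {τ α : ℝ} (hτ : 0 ≤ τ) (hα : α ∈ Set.Icc (0:ℝ) 1)
    (hR : 0 < Rv ν τ α) : 0 < Vv p ν τ α := by
  rcases hτ.eq_or_lt with rfl | hτpos
  · have h1 := vP_Ctau_zero (ν := ν) hp h0 hfin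
    have h2 : 0 ≤ α * vP p ν ({-(0:ℝ), 0} : Set ℝ) := mul_nonneg hα.1 (vP_nonneg _)
    rw [Vv, h1]
    linarith
  · by_contra hle
    push_neg at hle
    have hCn := vP_nonneg (p := p) (ν := ν) (Ctau τ)
    have hpn : 0 ≤ α * vP p ν ({-τ, τ} : Set ℝ) := mul_nonneg hα.1 (vP_nonneg _)
    rw [Vv] at hle
    have hC0 : vP p ν (Ctau τ) = 0 := by linarith
    have hp0 : α * vP p ν ({-τ, τ} : Set ℝ) = 0 := by linarith
    have hνC : ν (Ctau τ) = 0 := by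
      by_contra hne
      exact absurd hC0 (vP_pos hp h0 hfin hτpos (Ctau_subset_Btau τ)
        (measurableSet_Ctau τ) hne).ne'
    have hc0 : (ν (Ctau τ)).toReal = 0 := by rw [hνC]; simp
    rw [Rv] at hR
    rcases mul_eq_zero.mp hp0 with hA | hV
    · rw [hA, hc0] at hR; simp at hR
    · have hνpair : ν ({-τ, τ} : Set ℝ) = 0 := by
        by_contra hne
        exact absurd hV (vP_pos hp h0 hfin hτpos (pair_subset_Btau hτ)
          (measurableSet_pairTau τ) hne).ne'
      rw [hc0, hνpair] at hR
      simp at hR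

lemma exists_of_mem [IsProbabilityMeasure ν] (hfin : momentP p ν < ∞) {r d : ℝ}
    (h : (r, d) ∈ Fgraph p ν) :
    ∃ τ α : ℝ, 0 ≤ τ ∧ α ∈ Set.Icc (0:ℝ) 1 ∧ r = Rv ν τ α ∧
      d = (1 - Vv p ν τ α) ^ (1 / p) := by
  rcases h with ⟨τ, hτ, heq⟩ | ⟨τ, hτ, hpos, α, hα, heq⟩
  · simp only [Prod.mk.injEq] at heq
    obtain ⟨h1, h2⟩ := heq
    refine ⟨τ, 1, hτ, ⟨zero_le_one, le_refl 1⟩, ?_, ?_⟩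
    · rw [h1]; exact phiTail_eq_Rv hτ
    · rw [h2, vP_Btau_eq_Vv hτ hfin]
  · simp only [Prod.mk.injEq] at heq
    obtain ⟨h1, h2⟩ := heq
    refine ⟨τ, α, hτ, ⟨hα.1, hα.2.le⟩, ?_, ?_⟩
    · rw [Rv]; exact h1
    · rw [h2]; congr 1; rw [Vv]; ring

lemma Vv_congr_le (hp : 0 < p) [IsProbabilityMeasure ν] (h0 : 0 < momentP p ν)
    (hfin : momentP p ν < ∞) {τ1 τ2 α1 α2 : ℝ} (hτ1 : 0 ≤ τ1) (h12 : τ1 ≤ τ2)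
    (hα1 : α1 ∈ Set.Icc (0:ℝ) 1) (hα2 : α2 ∈ Set.Icc (0:ℝ) 1)
    (hR : Rv ν τ1 α1 = Rv ν τ2 α2) : Vv p ν τ1 α1 = Vv p ν τ2 α2 := by
  have hτ2 : 0 ≤ τ2 := hτ1.trans h12
  rcases eq_or_lt_of_le h12 with rfl | hlt
  · rw [Rv, Rv] at hR
    have ha : α1 * (ν ({-τ1, τ1} : Set ℝ)).toReal
        = α2 * (ν ({-τ1, τ1} : Set ℝ)).toReal := by linarith
    rcases eq_or_ne (ν ({-τ1, τ1} : Set ℝ)) 0 with hz | hz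
    · rw [Vv, Vv, vP_null hz, mul_zero, mul_zero]
    · have hapos : 0 < (ν ({-τ1, τ1} : Set ℝ)).toReal :=
        ENNReal.toReal_pos hz (measure_ne_top ν _)
      have hαeq : α1 = α2 := mul_right_cancel₀ hapos.ne' ha
      rw [Vv, Vv, hαeq]
  · have hb2 : (ν (Btau τ2)).toReal
        = (ν (Ctau τ2)).toReal + (ν ({-τ2, τ2} : Set ℝ)).toReal :=
      toReal_measure_Btau hτ2
    have hsub : Btau τ2 ⊆ Ctau τ1 := Btau_subset_Ctau hlt
    have hle1 : (ν (Btau τ2)).toReal ≤ (ν (Ctau τ1)).toReal :=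
      ENNReal.toReal_mono (measure_ne_top ν _) (measure_mono hsub)
    have ha1n : (0:ℝ) ≤ (ν ({-τ1, τ1} : Set ℝ)).toReal := ENNReal.toReal_nonneg
    have ha2n : (0:ℝ) ≤ (ν ({-τ2, τ2} : Set ℝ)).toReal := ENNReal.toReal_nonneg
    have h1 : 0 ≤ α1 * (ν ({-τ1, τ1} : Set ℝ)).toReal := mul_nonneg hα1.1 ha1n
    have h2 : α2 * (ν ({-τ2, τ2} : Set ℝ)).toReal ≤ (ν ({-τ2, τ2} : Set ℝ)).toReal :=
      mul_le_of_le_one_left ha2n hα2.2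
    rw [Rv, Rv] at hR
    have hc1b : (ν (Ctau τ1)).toReal = (ν (Btau τ2)).toReal := by linarith
    have hα1a1 : α1 * (ν ({-τ1, τ1} : Set ℝ)).toReal = 0 := by linarith
    have hα2a2 : α2 * (ν ({-τ2, τ2} : Set ℝ)).toReal
        = (ν ({-τ2, τ2} : Set ℝ)).toReal := by linarith
    have hνeq : ν (Ctau τ1) = ν (Btau τ2) :=
      (ENNReal.toReal_eq_toReal_iff' (measure_ne_top ν _) (measure_ne_top ν _)).mp hc1b
    have hdiff : ν (Ctau τ1 \ Btau τ2) = 0 := by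
      rw [measure_diff hsub (measurableSet_Btau τ2).nullMeasurableSet
        (measure_ne_top ν _), hνeq, tsub_self]
    have hmmeq : mm p ν (Ctau τ1) = mm p ν (Btau τ2) := by
      have hu : Btau τ2 ∪ (Ctau τ1 \ Btau τ2) = Ctau τ1 := Set.union_diff_cancel hsub
      simp only [mm]
      rw [← hu, lintegral_union ((measurableSet_Ctau τ1).diff (measurableSet_Btau τ2))
        disjoint_sdiff_self_right, setLIntegral_measure_zero _ _ hdiff, add_zero]
    have hvPC1 : vP p ν (Ctau τ1) = vP p ν (Btau τ2) := by
      rw [vP_eq, vP_eq, hmmeq]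
    have ht1 : α1 * vP p ν ({-τ1, τ1} : Set ℝ) = 0 := by
      rcases mul_eq_zero.mp hα1a1 with h | h
      · rw [h, zero_mul]
      · rw [vP_null (measure_eq_zero_of_toReal h), mul_zero]
    have h20 : (α2 - 1) * (ν ({-τ2, τ2} : Set ℝ)).toReal = 0 := by
      rw [sub_mul, one_mul, hα2a2, sub_self]
    have ht2 : α2 * vP p ν ({-τ2, τ2} : Set ℝ) = vP p ν ({-τ2, τ2} : Set ℝ) := by
      rcases mul_eq_zero.mp h20 with h | h
      · rw [sub_eq_zero.mp h, one_mul]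
      · rw [vP_null (measure_eq_zero_of_toReal h), mul_zero]
    rw [Vv, Vv, ht1, ht2, add_zero, hvPC1, vP_split hτ2 hfin]

lemma Vv_congr (hp : 0 < p) [IsProbabilityMeasure ν] (h0 : 0 < momentP p ν)
    (hfin : momentP p ν < ∞) {τ1 τ2 α1 α2 : ℝ} (hτ1 : 0 ≤ τ1) (hτ2 : 0 ≤ τ2)
    (hα1 : α1 ∈ Set.Icc (0:ℝ) 1) (hα2 : α2 ∈ Set.Icc (0:ℝ) 1)
    (hR : Rv ν τ1 α1 = Rv ν τ2 α2) : Vv p ν τ1 α1 = Vv p ν τ2 α2 := by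
  rcases le_total τ1 τ2 with h | h
  · exact Vv_congr_le hp h0 hfin hτ1 h hα1 hα2 hR
  · exact (Vv_congr_le hp h0 hfin hτ2 h hα2 hα1 hR.symm).symm

end PropTwoAux

/-- Proposition 2: the set of pairs `F_ν` is the graph of a function from `(0,1]` to `[0,1)`:
each `r ∈ (0,1]` is matched with exactly one `d ∈ [0,1)`. -/
theorem Fgraph_is_function
    (p : ℝ) (hp : 0 < p) (ν : Measure ℝ) [IsProbabilityMeasure ν]
    (hmom0 : 0 < momentP p ν) (hmomfin : momentP p ν < ∞) :
    ∀ r ∈ Set.Ioc (0:ℝ) 1, ∃ d ∈ Set.Ico (0:ℝ) 1,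
      (r, d) ∈ Fgraph p ν ∧ ∀ d' : ℝ, (r, d') ∈ Fgraph p ν → d' = d := by
  rintro r ⟨hr0, hr1⟩
  -- the set of thresholds whose tail probability is at least `r`
  set S : Set ℝ := {τ | 0 ≤ τ ∧ r ≤ phiTail ν τ} with hSdef
  have hphi0 : phiTail ν 0 = 1 := by
    rw [phiTail, Btau_zero, measure_univ, ENNReal.toReal_one]
  have h0S : (0:ℝ) ∈ S := ⟨le_refl 0, by rw [hphi0]; exact hr1⟩
  have hSne : S.Nonempty := ⟨0, h0S⟩
  -- S is bounded above
  obtain ⟨N, hN⟩ : ∃ N : ℕ, phiTail ν N < r := by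
    have hempty : ⋂ n : ℕ, Btau (n : ℝ) = (∅ : Set ℝ) := by
      ext x
      simp only [Btau_eq, Set.mem_iInter, Set.mem_setOf_eq, Set.mem_empty_iff_false,
        iff_false, not_forall, not_le]
      exact exists_nat_gt |x|
    have hanti : Antitone (fun n : ℕ => Btau (n : ℝ)) := by
      intro n m hnm
      exact Btau_subset (by exact_mod_cast hnm)
    have hT : Tendsto (fun n : ℕ => ν (Btau (n : ℝ))) atTop (𝓝 0) := by
      have := tendsto_measure_iInter_atTop
        (fun n : ℕ => (measurableSet_Btau (n : ℝ)).nullMeasurableSet) hanti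
        ⟨0, measure_ne_top ν _⟩
      rw [hempty, measure_empty] at this
      exact this
    have hrpos : (0:ℝ≥0∞) < ENNReal.ofReal r := ENNReal.ofReal_pos.2 hr0
    have hev := hT.eventually (Filter.Tendsto.eventually_lt_const hrpos tendsto_id)
    rcases hev.exists with ⟨N, hN⟩
    exact ⟨N, by rw [phiTail]; exact ENNReal.toReal_lt_of_lt_ofReal hN⟩
  have hbdd : BddAbove S := by
    refine ⟨N, fun τ hτ => ?_⟩
    by_contra hgt
    push_neg at hgt
    have : phiTail ν τ ≤ phiTail ν N :=
      ENNReal.toReal_mono (measure_ne_top ν _) (measure_mono (Btau_subset hgt.le))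
    exact absurd hτ.2 (by linarith)
  set τs : ℝ := sSup S with hτs
  have hτs0 : 0 ≤ τs := le_csSup hbdd h0S
  have hgt : ∀ τ : ℝ, τs < τ → phiTail ν τ < r := by
    intro τ hτ
    by_contra hle
    push_neg at hle
    exact absurd (le_csSup hbdd ⟨le_trans hτs0 hτ.le, hle⟩) (not_le.2 hτ)
  -- left-continuity: r ≤ phiTail ν τs
  have hphi_star : r ≤ phiTail ν τs := by
    have hanti : Antitone (fun n : ℕ => Btau (τs - 1 / (n + 1))) := by
      intro n m hnm
      refine Btau_subset ?_
      have h1 : ((n:ℝ) + 1) ≤ (m:ℝ) + 1 := by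
        have : (n:ℝ) ≤ m := Nat.cast_le.2 hnm
        linarith
      have h2 : (1:ℝ) / ((m:ℝ) + 1) ≤ 1 / ((n:ℝ) + 1) :=
        one_div_le_one_div_of_le (by positivity) h1
      linarith
    have hInter : ⋂ n : ℕ, Btau (τs - 1 / (n + 1)) = Btau τs := by
      ext x
      simp only [Btau_eq, Set.mem_iInter, Set.mem_setOf_eq]
      constructor
      · intro h
        by_contra hlt
        push_neg at hlt
        obtain ⟨n, hn⟩ := exists_nat_one_div_lt (sub_pos.2 hlt)
        have := h n
        linarith
      · intro h n
        have hpos : (0:ℝ) < 1 / ((n:ℝ) + 1) := by positivity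
        linarith
    have hT0 := tendsto_measure_iInter_atTop
      (fun n : ℕ => (measurableSet_Btau (τs - 1 / (n + 1))).nullMeasurableSet) hanti
      ⟨0, measure_ne_top ν _⟩
    rw [hInter] at hT0
    have hT : Tendsto (fun n : ℕ => phiTail ν (τs - 1 / (n + 1))) atTop
        (𝓝 (phiTail ν τs)) :=
      (ENNReal.tendsto_toReal (measure_ne_top ν _)).comp hT0
    refine ge_of_tendsto' hT (fun n => ?_)
    have hlt : τs - 1 / ((n:ℝ) + 1) < τs := by
      have hpos : (0:ℝ) < 1 / ((n:ℝ) + 1) := by positivity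
      linarith
    obtain ⟨t, htS, hlt2⟩ := exists_lt_of_lt_csSup hSne hlt
    exact le_trans htS.2
      (ENNReal.toReal_mono (measure_ne_top ν _) (measure_mono (Btau_subset hlt2.le)))
  -- right-continuity: ν (Ctau τs) ≤ r
  have hCle : (ν (Ctau τs)).toReal ≤ r := by
    have hmono : Monotone (fun n : ℕ => Btau (τs + 1 / (n + 1))) := by
      intro n m hnm
      refine Btau_subset ?_
      have h1 : ((n:ℝ) + 1) ≤ (m:ℝ) + 1 := by
        have : (n:ℝ) ≤ m := Nat.cast_le.2 hnm
        linarith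
      have h2 : (1:ℝ) / ((m:ℝ) + 1) ≤ 1 / ((n:ℝ) + 1) :=
        one_div_le_one_div_of_le (by positivity) h1
      linarith
    have hUnion : ⋃ n : ℕ, Btau (τs + 1 / (n + 1)) = Ctau τs := by
      ext x
      simp only [Btau_eq, Ctau_eq, Set.mem_iUnion, Set.mem_setOf_eq]
      constructor
      · rintro ⟨n, hn⟩
        have hpos : (0:ℝ) < 1 / ((n:ℝ) + 1) := by positivity
        linarith
      · intro h
        obtain ⟨n, hn⟩ := exists_nat_one_div_lt (sub_pos.2 h)
        exact ⟨n, by linarith⟩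
    have hT0 := tendsto_measure_iUnion_atTop (μ := ν) hmono
    rw [hUnion] at hT0
    have hT : Tendsto (fun n : ℕ => phiTail ν (τs + 1 / (n + 1))) atTop
        (𝓝 ((ν (Ctau τs)).toReal)) :=
      (ENNReal.tendsto_toReal (measure_ne_top ν _)).comp hT0
    refine le_of_tendsto' hT (fun n => ?_)
    refine (hgt _ ?_).le
    have hpos : (0:ℝ) < 1 / ((n:ℝ) + 1) := by positivity
    linarith
  -- produce the representation (τ0, α0)
  have hkey : ∃ τ0 α0 : ℝ, 0 ≤ τ0 ∧ α0 ∈ Set.Icc (0:ℝ) 1 ∧ r = Rv ν τ0 α0 ∧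
      (r, (1 - Vv p ν τ0 α0) ^ (1 / p)) ∈ Fgraph p ν := by
    rcases eq_or_lt_of_le hphi_star with heq | hlt
    · refine ⟨τs, 1, hτs0, ⟨zero_le_one, le_refl 1⟩, ?_, ?_⟩
      · rw [heq]; exact phiTail_eq_Rv hτs0
      · left
        exact ⟨τs, hτs0, by rw [heq, vP_Btau_eq_Vv hτs0 hmomfin]⟩
    · have hba : phiTail ν τs
          = (ν (Ctau τs)).toReal + (ν ({-τs, τs} : Set ℝ)).toReal := by
        rw [phiTail]; exact toReal_measure_Btau hτs0
      have ha : 0 < (ν ({-τs, τs} : Set ℝ)).toReal := by linarith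
      set c := (ν (Ctau τs)).toReal with hc
      set a := (ν ({-τs, τs} : Set ℝ)).toReal with haa
      set α : ℝ := (r - c) / a with hαdef
      have hα0 : 0 ≤ α := div_nonneg (by linarith) ha.le
      have hα1 : α < 1 := (div_lt_one ha).2 (by linarith)
      have hαa : α * a = r - c := div_mul_cancel₀ (r - c) ha.ne'
      have hrR : r = Rv ν τs α := by rw [Rv, ← hc, ← haa, hαa]; ring
      refine ⟨τs, α, hτs0, ⟨hα0, hα1.le⟩, hrR, ?_⟩
      right
      refine ⟨τs, hτs0, ha, α, ⟨hα0, hα1⟩, ?_⟩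
      simp only [Prod.mk.injEq]
      constructor
      · rw [← hc, ← haa]; linarith [hαa]
      · congr 1
        rw [Vv]; ring
  obtain ⟨τ0, α0, hτ0, hα0, hrR, hmem⟩ := hkey
  refine ⟨(1 - Vv p ν τ0 α0) ^ (1 / p), ?_, hmem, ?_⟩
  · have hVpos : 0 < Vv p ν τ0 α0 :=
      Vv_pos hp hmom0 hmomfin hτ0 hα0 (by rw [← hrR]; exact hr0)
    have hVle : Vv p ν τ0 α0 ≤ 1 := Vv_le_one hmom0 hmomfin hτ0 hα0
    constructor
    · exact Real.rpow_nonneg (by linarith) _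
    · exact Real.rpow_lt_one (by linarith) (by linarith) (by positivity)
  · intro d' hd'
    obtain ⟨τ', α', hτ', hα', hrR', hd'eq⟩ := exists_of_mem hmomfin hd'
    rw [hd'eq]
    congr 2
    exact Vv_congr hp hmom0 hmomfin hτ' hτ0 hα' hα0 (hrR'.symm.trans hrR)

end
end

section
/- Let X = (X_n)_{n≥1} be a process with distribution μ on ℝ^ℕ that has a strong ℓp-characterization with constant limiting function f_{p,μ}. Then: (i) if 0 < r₁ < r₂ ≤ 1 then f_{p,μ}(r₂) ≤ f_{p,μ}(r₁); (ii) if 0 < r₁ < r₂ ≤ 1 and f_{p,μ}(r₂) = f_{p,μ}(r₁), then f_{p,μ}(r₂) = f_{p,μ}(r₁) = 0. -/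
open MeasureTheory Filter Set
open scoped ENNReal Topology Classical

noncomputable section

section Aux

namespace StrongCharAux

variable {p : ℝ} {n : ℕ}

def sSet (p : ℝ) (n k : ℕ) (x : Fin n → ℝ) : Set ℝ :=
  {e : ℝ | ∃ S : Finset (Fin n), S.card = k ∧ e = ∑ i ∈ Sᶜ, |x i| ^ p}

def sMin (p : ℝ) (n k : ℕ) (x : Fin n → ℝ) : ℝ := sInf (sSet p n k x)

lemma sSet_finite (k : ℕ) (x : Fin n → ℝ) : (sSet p n k x).Finite := by
  apply (Set.finite_range (fun S : Finset (Fin n) => ∑ i ∈ Sᶜ, |x i| ^ p)).subset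
  rintro e ⟨S, -, rfl⟩; exact ⟨S, rfl⟩

lemma sSet_nonempty {k : ℕ} (hk : k ≤ n) (x : Fin n → ℝ) : (sSet p n k x).Nonempty := by
  obtain ⟨S, -, hS⟩ := Finset.exists_subset_card_eq (s := (Finset.univ : Finset (Fin n))) (n := k)
    (by simpa using hk)
  exact ⟨_, S, hS, rfl⟩

lemma sSet_nonneg {k : ℕ} {x : Fin n → ℝ} {e : ℝ} (he : e ∈ sSet p n k x) : 0 ≤ e := by
  obtain ⟨S, -, rfl⟩ := he
  exact Finset.sum_nonneg fun i _ => Real.rpow_nonneg (abs_nonneg _) _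

lemma sMin_mem {k : ℕ} (hk : k ≤ n) (x : Fin n → ℝ) : sMin p n k x ∈ sSet p n k x :=
  (sSet_nonempty hk x).csInf_mem (sSet_finite k x)

lemma sMin_le {k : ℕ} (x : Fin n → ℝ) {S : Finset (Fin n)} (hS : S.card = k) :
    sMin p n k x ≤ ∑ i ∈ Sᶜ, |x i| ^ p :=
  csInf_le (sSet_finite k x).bddBelow ⟨S, hS, rfl⟩

lemma sMin_nonneg {k : ℕ} (hk : k ≤ n) (x : Fin n → ℝ) : 0 ≤ sMin p n k x :=
  sSet_nonneg (sMin_mem hk x)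

lemma sMin_anti {k₁ k₂ : ℕ} (h12 : k₁ ≤ k₂) (h2 : k₂ ≤ n) (x : Fin n → ℝ) :
    sMin p n k₂ x ≤ sMin p n k₁ x := by
  obtain ⟨S₁, hS₁, hval⟩ := sMin_mem (p := p) (le_trans h12 h2) x
  obtain ⟨S₂, hsub, hS₂⟩ := Finset.exists_superset_card_eq (n := k₂) (s := S₁)
      (by rw [hS₁]; exact h12) (by simpa using h2)
  calc sMin p n k₂ x ≤ ∑ i ∈ S₂ᶜ, |x i| ^ p := sMin_le x hS₂
    _ ≤ ∑ i ∈ S₁ᶜ, |x i| ^ p := Finset.sum_le_sum_of_subset_of_nonneg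
        (Finset.compl_subset_compl.2 hsub) (fun i _ _ => Real.rpow_nonneg (abs_nonneg _) _)
    _ = sMin p n k₁ x := hval.symm

lemma sMin_step {k : ℕ} (hk : k < n) (x : Fin n → ℝ) :
    ((n : ℝ) - k) * sMin p n (k + 1) x ≤ ((n : ℝ) - (k + 1)) * sMin p n k x := by
  obtain ⟨S, hS, hval⟩ := sMin_mem (p := p) hk.le x
  have hcard : (Sᶜ.card : ℝ) = (n : ℝ) - k := by
    have h : Sᶜ.card = n - k := by rw [Finset.card_compl, hS, Fintype.card_fin]
    rw [h, Nat.cast_sub hk.le]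
  have key : ∀ j ∈ Sᶜ, sMin p n (k + 1) x ≤ sMin p n k x - |x j| ^ p := by
    intro j hj
    have hjS : j ∉ S := Finset.mem_compl.1 hj
    have hcard' : (insert j S).card = k + 1 := by rw [Finset.card_insert_of_notMem hjS, hS]
    have h := sMin_le (p := p) x hcard'
    rwa [Finset.compl_insert, Finset.sum_erase_eq_sub hj, ← hval] at h
  have hsum := Finset.sum_le_sum key
  rw [Finset.sum_const, Finset.sum_sub_distrib, Finset.sum_const, ← hval,
    nsmul_eq_mul, nsmul_eq_mul, hcard] at hsum
  push_cast
  linarith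

lemma sMin_chain (k₁ : ℕ) (x : Fin n → ℝ) : ∀ k₂, k₁ ≤ k₂ → k₂ ≤ n →
    ((n : ℝ) - k₁) * sMin p n k₂ x ≤ ((n : ℝ) - k₂) * sMin p n k₁ x := by
  intro k₂ h12
  induction k₂, h12 using Nat.le_induction with
  | base => intro _; exact le_refl _
  | succ m hm ih =>
    intro hmn
    have hmn' : m < n := hmn
    have h1 := sMin_step (p := p) hmn' x
    have h2 := ih hmn'.le
    have hpos : (0:ℝ) < (n:ℝ) - m := by
      have := (Nat.cast_lt (α := ℝ)).2 hmn'; linarith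
    have hnn1 : (0:ℝ) ≤ (n:ℝ) - k₁ := by
      have := (Nat.cast_le (α := ℝ)).2 (hm.trans hmn'.le); linarith
    have hnn2 : (0:ℝ) ≤ (n:ℝ) - ((m:ℝ) + 1) := by
      have := (Nat.cast_le (α := ℝ)).2 hmn; push_cast at this; linarith
    have H1 := mul_le_mul_of_nonneg_left h1 hnn1
    have H2 := mul_le_mul_of_nonneg_left h2 hnn2
    have H3 : ((n:ℝ) - m) * (((n:ℝ) - k₁) * sMin p n (m + 1) x)
        ≤ ((n:ℝ) - m) * (((n:ℝ) - ((m:ℝ) + 1)) * sMin p n k₁ x) := by nlinarith [H1, H2]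
    have := le_of_mul_le_mul_left H3 hpos
    push_cast
    linarith

lemma sigmaP_eq (hp : 0 < p) {k : ℕ} (hk : k ≤ n) (x : Fin n → ℝ) :
    sigmaP p n k x = sMin p n k x ^ (1 / p) := by
  obtain ⟨S₀, hS₀, hval⟩ := sMin_mem (p := p) hk x
  apply le_antisymm
  · apply csInf_le
    · refine ⟨0, fun e he => ?_⟩
      obtain ⟨S, -, rfl⟩ := he
      exact Real.rpow_nonneg
        (Finset.sum_nonneg fun i _ => Real.rpow_nonneg (abs_nonneg _) _) _
    · exact ⟨S₀, hS₀, by rw [hval]⟩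
  · refine le_csInf ⟨(∑ i ∈ S₀ᶜ, |x i| ^ p) ^ (1/p), S₀, hS₀, rfl⟩ ?_
    rintro e ⟨S, hS, rfl⟩
    exact Real.rpow_le_rpow (sMin_nonneg hk x) (sMin_le x hS) (by positivity)

lemma sigmaTilde_anti (hp : 0 < p) {k₁ k₂ : ℕ} (h12 : k₁ ≤ k₂) (h2 : k₂ ≤ n)
    (x : Fin n → ℝ) : sigmaTilde p n k₂ x ≤ sigmaTilde p n k₁ x := by
  unfold sigmaTilde
  rw [sigmaP_eq hp h2, sigmaP_eq hp (h12.trans h2)]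
  have hD : (0:ℝ) ≤ (∑ i, |x i| ^ p) ^ (1/p) :=
    Real.rpow_nonneg (Finset.sum_nonneg fun i _ => Real.rpow_nonneg (abs_nonneg _) _) _
  rcases hD.eq_or_lt with h | h
  · rw [← h]; simp
  · exact (div_le_div_iff_of_pos_right h).2
      (Real.rpow_le_rpow (sMin_nonneg h2 x) (sMin_anti h12 h2 x) (by positivity))

lemma sigmaTilde_rpow (hp : 0 < p) {k : ℕ} (hk : k ≤ n) (x : Fin n → ℝ) :
    sigmaTilde p n k x ^ p = sMin p n k x / ∑ i, |x i| ^ p := by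
  have hT : (0:ℝ) ≤ ∑ i, |x i| ^ p :=
    Finset.sum_nonneg fun i _ => Real.rpow_nonneg (abs_nonneg _) _
  have hM : 0 ≤ sMin p n k x := sMin_nonneg hk x
  rw [sigmaTilde, sigmaP_eq hp hk, ← Real.div_rpow hM hT,
    ← Real.rpow_mul (div_nonneg hM hT), one_div_mul_cancel hp.ne', Real.rpow_one]

lemma sigmaTilde_chain (hp : 0 < p) {k₁ k₂ : ℕ} (h12 : k₁ ≤ k₂) (h2 : k₂ ≤ n)
    (x : Fin n → ℝ) :
    ((n : ℝ) - k₁) * sigmaTilde p n k₂ x ^ p ≤ ((n : ℝ) - k₂) * sigmaTilde p n k₁ x ^ p := by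
  rw [sigmaTilde_rpow hp h2 x, sigmaTilde_rpow hp (h12.trans h2) x]
  have hT : (0:ℝ) ≤ ∑ i, |x i| ^ p :=
    Finset.sum_nonneg fun i _ => Real.rpow_nonneg (abs_nonneg _) _
  have key := sMin_chain (p := p) k₁ x k₂ h12 h2
  rw [← mul_div_assoc, ← mul_div_assoc]
  rcases hT.eq_or_lt with h | h
  · rw [← h]; simp
  · exact (div_le_div_iff_of_pos_right h).2 key

end StrongCharAux

end Aux

/-- Proposition 3: monotonicity of the constant limiting function of a strong
`ℓp`-characterization. -/
theorem strong_char_limit_monotone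
    (p : ℝ) (hp : 0 < p) (μ : Measure (ℕ → ℝ)) [IsProbabilityMeasure μ]
    (f : ℝ → ℝ) (hchar : StrongLpChar p μ f) :
    (∀ r₁ r₂ : ℝ, 0 < r₁ → r₁ < r₂ → r₂ ≤ 1 → f r₂ ≤ f r₁) ∧
    (∀ r₁ r₂ : ℝ, 0 < r₁ → r₁ < r₂ → r₂ ≤ 1 → f r₂ = f r₁ → f r₂ = 0 ∧ f r₁ = 0) := by
  classical
  have hne : μ ≠ 0 := IsProbabilityMeasure.ne_zero μ
  have hNeBot : (MeasureTheory.ae μ).NeBot := MeasureTheory.ae_neBot.mpr hne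
  have main : ∀ r₁ r₂ : ℝ, 0 < r₁ → r₁ < r₂ → r₂ ≤ 1 →
      f r₂ ≤ f r₁ ∧ (1 - r₁) * f r₂ ^ p ≤ (1 - r₂) * f r₁ ^ p := by
    intro r₁ r₂ h1 h12 h2
    set k₁ : ℕ → ℕ := fun n => ⌊r₁ * n⌋₊ with hk₁def
    set k₂ : ℕ → ℕ := fun n => ⌊r₂ * n⌋₊ with hk₂def
    have hr₁ : r₁ ∈ Set.Ioc (0:ℝ) 1 := ⟨h1, h12.le.trans h2⟩
    have hr₂ : r₂ ∈ Set.Ioc (0:ℝ) 1 := ⟨h1.trans h12, h2⟩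
    have ht₁ : Tendsto (fun n : ℕ => (k₁ n : ℝ) / n) atTop (𝓝 r₁) :=
      (tendsto_nat_floor_mul_div_atTop h1.le).comp tendsto_natCast_atTop_atTop
    have ht₂ : Tendsto (fun n : ℕ => (k₂ n : ℝ) / n) atTop (𝓝 r₂) :=
      (tendsto_nat_floor_mul_div_atTop (h1.trans h12).le).comp tendsto_natCast_atTop_atTop
    have hae₁ := hchar.2 r₁ hr₁ k₁ ht₁
    have hae₂ := hchar.2 r₂ hr₂ k₂ ht₂
    obtain ⟨x, hx₁, hx₂⟩ := (hae₁.and hae₂).exists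
    have hkle : ∀ n : ℕ, k₁ n ≤ k₂ n := fun n =>
      Nat.floor_mono (mul_le_mul_of_nonneg_right h12.le (Nat.cast_nonneg n))
    have hk2n : ∀ n : ℕ, k₂ n ≤ n := fun n => by
      have h : (⌊r₂ * n⌋₊ : ℕ) ≤ ⌊(n : ℝ)⌋₊ := Nat.floor_mono (by
        calc r₂ * n ≤ 1 * n := mul_le_mul_of_nonneg_right h2 (Nat.cast_nonneg n)
          _ = (n : ℝ) := one_mul _)
      simpa using h
    constructor
    · exact le_of_tendsto_of_tendsto hx₂ hx₁ (Filter.Eventually.of_forall fun n =>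
        StrongCharAux.sigmaTilde_anti hp (hkle n) (hk2n n) (proj n x))
    · have hta : Tendsto
          (fun n : ℕ => (1 - (k₁ n : ℝ) / n) * sigmaTilde p n (k₂ n) (proj n x) ^ p)
          atTop (𝓝 ((1 - r₁) * f r₂ ^ p)) :=
        (tendsto_const_nhds.sub ht₁).mul (hx₂.rpow_const (Or.inr hp.le))
      have htb : Tendsto
          (fun n : ℕ => (1 - (k₂ n : ℝ) / n) * sigmaTilde p n (k₁ n) (proj n x) ^ p)
          atTop (𝓝 ((1 - r₂) * f r₁ ^ p)) :=
        (tendsto_const_nhds.sub ht₂).mul (hx₁.rpow_const (Or.inr hp.le))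
      refine le_of_tendsto_of_tendsto hta htb ?_
      filter_upwards [eventually_ge_atTop 1] with n hn
      have hn0 : (0:ℝ) < n := by exact_mod_cast hn
      have key := StrongCharAux.sigmaTilde_chain hp (hkle n) (hk2n n) (proj n x)
      have e1 : 1 - (k₁ n : ℝ) / n = ((n:ℝ) - k₁ n) / n := by field_simp
      have e2 : 1 - (k₂ n : ℝ) / n = ((n:ℝ) - k₂ n) / n := by field_simp
      rw [e1, e2, div_mul_eq_mul_div, div_mul_eq_mul_div]
      exact (div_le_div_iff_of_pos_right hn0).2 key
  refine ⟨fun r₁ r₂ h1 h12 h2 => (main r₁ r₂ h1 h12 h2).1, ?_⟩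
  intro r₁ r₂ h1 h12 h2 heq
  have h := (main r₁ r₂ h1 h12 h2).2
  rw [heq] at h
  have hf0 : 0 ≤ f r₁ := (hchar.1 r₁ ⟨h1, h12.le.trans h2⟩).1
  have hz : f r₁ = 0 := by
    by_contra hne0
    have hpos : 0 < f r₁ := lt_of_le_of_ne hf0 (Ne.symm hne0)
    have hppos : 0 < f r₁ ^ p := Real.rpow_pos_of_pos hpos p
    nlinarith
  exact ⟨by rw [heq, hz], hz⟩


end
end
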